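/- arXiv:1411.3244 — 6 statements merged into one kernel-verified Lean document; each statement's English description precedes it below -/
import Mathlib

section
/- For every natural number n ≥ 1, the polygamma function of order 2n at 1/2 satisfies ψ^{(2n)}(1/2) = -(2^{2n+1} - 1) · (2n)! · ζ(2n+1); formally, iteratedDeriv (2n+1) (fun x : ℝ => Real.log (Real.Gamma x)) (1/2) = -((2^(2*n+1) : ℝ) - 1) * (2*n)! * ∑' k : ℕ, (1 : ℝ) / (k+1)^(2*n+1). -/
open Real Filter Topology Finset

local notation "γ" => Real.eulerMascheroniConstant

noncomputable def pgA (x : ℝ) : ℝ := ∑' k : ℕ, (x / ((k:ℝ)+1) - Real.log (1 + x / ((k:ℝ)+1)))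
noncomputable def pgT (x : ℝ) : ℝ := ∑' k : ℕ, (1 / ((k:ℝ)+1) - 1 / (x + ((k:ℝ)+1)))
noncomputable def pgPsi (x : ℝ) : ℝ := -γ - x⁻¹ + pgT x
noncomputable def pgS (m : ℕ) (x : ℝ) : ℝ := ∑' k : ℕ, 1 / (x + (k:ℝ)) ^ m

lemma pg_sq_summable : Summable (fun k : ℕ => 1 / ((k : ℝ) + 1) ^ 2) := by
  have h := (Real.summable_one_div_nat_pow (p := 2)).mpr one_lt_two
  have h2 := (summable_nat_add_iff (f := fun n : ℕ => 1 / (n : ℝ) ^ 2) 1).mpr h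
  simpa using h2

lemma pg_bound {M : ℕ} (hM : 2 ≤ M) {x : ℝ} (hx : 1/4 ≤ x) (k : ℕ) :
    1 / (x + k) ^ M ≤ 4 ^ M / ((k : ℝ) + 1) ^ 2 := by
  have hk0 : (0:ℝ) ≤ (k:ℝ) := Nat.cast_nonneg k
  have hk1 : (1:ℝ) ≤ (k:ℝ) + 1 := by linarith
  have h1 : ((k : ℝ) + 1) / 4 ≤ x + k := by linarith
  have hpos : (0:ℝ) < ((k:ℝ)+1)/4 := by positivity
  have h2 : (((k:ℝ)+1)/4) ^ M ≤ (x + k) ^ M := pow_le_pow_left₀ hpos.le h1 M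
  have h3 : ((k:ℝ)+1)^2 / 4^M ≤ (x+k)^M := by
    calc ((k:ℝ)+1)^2/4^M ≤ ((k:ℝ)+1)^M/4^M := by
          gcongr
      _ = (((k:ℝ)+1)/4)^M := by rw [div_pow]
      _ ≤ _ := h2
  have hxk : (0:ℝ) < x + k := by linarith
  rw [div_le_div_iff₀ (by positivity) (by positivity)]
  calc (1:ℝ) * ((k:ℝ)+1)^2 = 4^M * (((k:ℝ)+1)^2/4^M) := by field_simp
    _ ≤ 4^M * (x+k)^M := by
        exact mul_le_mul_of_nonneg_left h3 (by positivity)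

lemma pgS_summable {M : ℕ} (hM : 2 ≤ M) {x : ℝ} (hx : 1/4 ≤ x) :
    Summable (fun k : ℕ => 1 / (x + k) ^ M) := by
  refine Summable.of_nonneg_of_le (fun k => ?_) (fun k => pg_bound hM hx k) ?_
  · have hxk : (0:ℝ) < x + k := by have := Nat.cast_nonneg (α := ℝ) k; linarith
    positivity
  · simpa [div_eq_mul_inv, mul_one_div] using pg_sq_summable.mul_left ((4:ℝ)^M)


lemma hasDerivAt_pg_term (j : ℕ) (c : ℝ) {x : ℝ} (hx : 0 < x + c) :
    HasDerivAt (fun y : ℝ => 1 / (y + c) ^ (j+1)) (-((j:ℝ)+1) / (x + c) ^ (j + 2)) x := by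
  have h1 : HasDerivAt (fun y : ℝ => (y + c) ^ (j+1)) (((j:ℝ)+1) * (x+c)^j) x := by
    have := ((hasDerivAt_id x).add_const c).pow (j+1)
    have h' : HasDerivAt ((fun y : ℝ => y + c) ^ (j+1)) (((j:ℝ)+1) * (x+c)^j) x := by simpa using this
    exact h'
  have h2 : HasDerivAt (fun y : ℝ => ((y + c) ^ (j+1))⁻¹) _ x := h1.inv (pow_ne_zero _ hx.ne')
  simp only [one_div]
  convert h2 using 1
  rw [div_eq_iff (by positivity), ← pow_mul]
  field_simp
  ring

lemma hasDerivAt_pgS (j : ℕ) (hj : 1 ≤ j) {x : ℝ} (hx : x ∈ Set.Ioo (1/4 : ℝ) 1) :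
    HasDerivAt (pgS (j+1)) (-((j:ℝ)+1) * pgS (j+2) x) x := by
  have key := hasDerivAt_tsum_of_isPreconnected
    (u := fun k : ℕ => ((j:ℝ)+1) * (4 ^ (j+2) / ((k:ℝ)+1) ^ 2))
    (t := Set.Ioo (1/4 : ℝ) 1)
    (g := fun (k : ℕ) (y : ℝ) => 1 / (y + (k:ℝ)) ^ (j+1))
    (g' := fun (k : ℕ) (y : ℝ) => -((j:ℝ)+1) / (y + (k:ℝ)) ^ (j+2))
    (y₀ := 1/2) (y := x)
    ?_ isOpen_Ioo (convex_Ioo _ _).isPreconnected ?_ ?_ (by norm_num) ?_ hx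
  · have : HasDerivAt (fun z => ∑' k : ℕ, 1 / (z + (k:ℝ)) ^ (j+1))
        (∑' k : ℕ, -((j:ℝ)+1) / (x + (k:ℝ)) ^ (j+2)) x := key
    have heq : (∑' k : ℕ, -((j:ℝ)+1) / (x + (k:ℝ)) ^ (j+2)) = -((j:ℝ)+1) * pgS (j+2) x := by
      rw [pgS, ← tsum_mul_left]
      congr 1 with k
      rw [mul_one_div]
    rw [heq] at this
    exact this
  · simpa [div_eq_mul_inv, mul_one_div, mul_assoc] using
      (pg_sq_summable.mul_left ((4:ℝ) ^ (j+2))).mul_left ((j:ℝ)+1)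
  · intro k y hy
    have h0 : 0 < y + (k:ℝ) := by
      have := Nat.cast_nonneg (α := ℝ) k
      have := hy.1; simp only [Set.mem_Ioo] at hy; linarith [hy.1]
    exact hasDerivAt_pg_term j (k:ℝ) h0
  · intro k y hy
    have h0 : 0 < y + (k:ℝ) := by
      have := Nat.cast_nonneg (α := ℝ) k
      linarith [hy.1]
    rw [norm_div, norm_neg, Real.norm_eq_abs, Real.norm_eq_abs,
      abs_of_nonneg (by positivity : (0:ℝ) ≤ (j:ℝ)+1), abs_of_nonneg (by positivity)]
    rw [div_eq_mul_one_div]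
    exact mul_le_mul_of_nonneg_left (pg_bound (by omega) (le_of_lt hy.1) k) (by positivity)
  · exact pgS_summable (by omega) (by norm_num)


lemma pg_log_le {t : ℝ} (ht : 0 ≤ t) : t / (1 + t) ≤ Real.log (1 + t) ∧ Real.log (1 + t) ≤ t := by
  have h1 : (0:ℝ) < 1 + t := by linarith
  constructor
  · have h2 := Real.log_le_sub_one_of_pos (x := (1+t)⁻¹) (by positivity)
    rw [Real.log_inv] at h2
    have : 1 - (1+t)⁻¹ = t / (1+t) := by field_simp; ring
    linarith
  · have := Real.log_le_sub_one_of_pos h1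
    linarith

lemma pg_a_nonneg {t : ℝ} (ht : 0 ≤ t) : 0 ≤ t - Real.log (1 + t) :=
  sub_nonneg.mpr (pg_log_le ht).2

lemma pg_a_le {t : ℝ} (ht : 0 ≤ t) : t - Real.log (1 + t) ≤ t ^ 2 := by
  have h1 : (0:ℝ) < 1 + t := by linarith
  have h2 := (pg_log_le ht).1
  have h3 : t - t / (1+t) = t^2 / (1+t) := by field_simp; ring
  have h4 : t^2 / (1+t) ≤ t^2 := by
    rw [div_le_iff₀ h1]; nlinarith
  linarith

lemma pgA_summable {x : ℝ} (hx : 0 ≤ x) :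
    Summable (fun k : ℕ => x / ((k:ℝ)+1) - Real.log (1 + x / ((k:ℝ)+1))) := by
  have hs := pg_sq_summable.mul_left (x^2)
  refine hs.of_nonneg_of_le (fun k => pg_a_nonneg (by positivity)) (fun k => ?_)
  refine le_trans (pg_a_le (by positivity)) (le_of_eq ?_)
  rw [div_pow, mul_one_div]

lemma pg_harmonic_cast (N : ℕ) : ((harmonic N : ℚ) : ℝ) = ∑ k ∈ Finset.range N, 1 / ((k:ℝ)+1) := by
  rw [harmonic]
  push_cast
  simp [one_div]

lemma pg_partial {x : ℝ} (hx : 0 < x) (N : ℕ) (hN : 1 ≤ N) :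
    Real.log (Real.GammaSeq x N) + x * (((harmonic N : ℚ):ℝ) - Real.log N - γ)
      = -γ * x - Real.log x
        + ∑ k ∈ Finset.range N, (x / ((k:ℝ)+1) - Real.log (1 + x / ((k:ℝ)+1))) := by
  have hN0 : (0:ℝ) < N := by exact_mod_cast hN
  set S1 := ∑ k ∈ Finset.range N, Real.log (x + ((k:ℝ)+1)) with hS1
  have hprod : ∀ j ∈ Finset.range (N+1), (0:ℝ) < x + (j:ℝ) := fun j _ => by positivity
  have hfac : (N.factorial : ℝ) = ∏ k ∈ Finset.range N, ((k:ℝ)+1) := by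
    rw [← Finset.prod_range_add_one_eq_factorial]
    push_cast
    rfl
  have e1 : Real.log (Real.GammaSeq x N)
      = x * Real.log N + Real.log (N.factorial : ℝ) - (Real.log x + S1) := by
    rw [Real.GammaSeq, Real.log_div (by positivity) (Finset.prod_pos hprod).ne',
        Real.log_mul (Real.rpow_pos_of_pos hN0 x).ne' (by positivity),
        Real.log_rpow hN0,
        Real.log_prod (fun j hj => (hprod j hj).ne'), Finset.sum_range_succ']
    push_cast
    rw [hS1]
    ring_nf
  have hlogfac : ∑ k ∈ Finset.range N, Real.log ((k:ℝ)+1) = Real.log (N.factorial : ℝ) := by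
    rw [← Real.log_prod (fun k _ => by positivity), hfac]
  have e2 : (∑ k ∈ Finset.range N, (x/((k:ℝ)+1) - Real.log (1+x/((k:ℝ)+1))))
      = x * ((harmonic N : ℚ):ℝ) - (S1 - Real.log (N.factorial : ℝ)) := by
    have hterm : ∀ k ∈ Finset.range N, x/((k:ℝ)+1) - Real.log (1+x/((k:ℝ)+1))
        = x * (1/((k:ℝ)+1)) - (Real.log (x + ((k:ℝ)+1)) - Real.log ((k:ℝ)+1)) := by
      intro k _
      have hk : (0:ℝ) < (k:ℝ)+1 := by positivity
      rw [← Real.log_div (by positivity) hk.ne', mul_one_div]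
      congr 2
      field_simp
      ring
    rw [Finset.sum_congr rfl hterm, Finset.sum_sub_distrib, ← Finset.mul_sum,
        Finset.sum_sub_distrib, hlogfac, ← hS1, pg_harmonic_cast]
  rw [e1, e2]
  ring

lemma logGamma_eq {x : ℝ} (hx : 0 < x) :
    Real.log (Real.Gamma x) = -γ * x - Real.log x + pgA x := by
  have hsum := pgA_summable hx.le
  have hA : Tendsto (fun N : ℕ => -γ * x - Real.log x
      + ∑ k ∈ Finset.range N, (x / ((k:ℝ)+1) - Real.log (1 + x / ((k:ℝ)+1)))) atTop
      (𝓝 (-γ * x - Real.log x + pgA x)) :=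
    tendsto_const_nhds.add hsum.hasSum.tendsto_sum_nat
  have h1 : Tendsto (fun N : ℕ => Real.log (Real.GammaSeq x N)) atTop
      (𝓝 (Real.log (Real.Gamma x))) :=
    ((Real.continuousAt_log (Real.Gamma_pos_of_pos hx).ne').tendsto).comp
      (Real.GammaSeq_tendsto_Gamma x)
  have h2 : Tendsto (fun N : ℕ => x * (((harmonic N : ℚ):ℝ) - Real.log N - γ)) atTop (𝓝 0) := by
    have h3 : Tendsto (fun N : ℕ => ((harmonic N : ℚ):ℝ) - Real.log N - γ) atTop (𝓝 0) := by
      have := Real.tendsto_harmonic_sub_log.sub_const γ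
      simpa using this
    simpa using h3.const_mul x
  have h4 := h1.add h2
  rw [add_zero] at h4
  have hB : Tendsto (fun N : ℕ => -γ * x - Real.log x
      + ∑ k ∈ Finset.range N, (x / ((k:ℝ)+1) - Real.log (1 + x / ((k:ℝ)+1)))) atTop
      (𝓝 (Real.log (Real.Gamma x))) := by
    apply h4.congr'
    filter_upwards [eventually_ge_atTop 1] with N hN
    exact pg_partial hx N hN
  exact tendsto_nhds_unique hB hA

lemma pgT_term_bounds {x : ℝ} (hx0 : 0 ≤ x) (hx1 : x ≤ 1) (k : ℕ) :
    0 ≤ 1/((k:ℝ)+1) - 1/(x+((k:ℝ)+1)) ∧ 1/((k:ℝ)+1) - 1/(x+((k:ℝ)+1)) ≤ 1/((k:ℝ)+1)^2 := by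
  have hk : (0:ℝ) < (k:ℝ)+1 := by positivity
  have hxk : (0:ℝ) < x + ((k:ℝ)+1) := by linarith
  constructor
  · rw [sub_nonneg]
    exact one_div_le_one_div_of_le hk (by linarith)
  · have heq : 1 / ((k:ℝ)+1) - 1 / (x + ((k:ℝ)+1)) = x / (((k:ℝ)+1) * (x + ((k:ℝ)+1))) := by
      field_simp; ring
    rw [heq]
    have h2 : ((k:ℝ)+1)^2 ≤ ((k:ℝ)+1) * (x + ((k:ℝ)+1)) := by nlinarith
    exact div_le_div₀ zero_le_one hx1 (by positivity) h2

lemma pgT_summable {x : ℝ} (hx0 : 0 ≤ x) (hx1 : x ≤ 1) :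
    Summable (fun k : ℕ => 1 / ((k:ℝ)+1) - 1 / (x + ((k:ℝ)+1))) :=
  Summable.of_nonneg_of_le (fun k => (pgT_term_bounds hx0 hx1 k).1)
    (fun k => (pgT_term_bounds hx0 hx1 k).2) pg_sq_summable

lemma hasDerivAt_pgA_term (k : ℕ) {y : ℝ} (hy : 0 < y) :
    HasDerivAt (fun z : ℝ => z / ((k:ℝ)+1) - Real.log (1 + z / ((k:ℝ)+1)))
      (1 / ((k:ℝ)+1) - 1 / (y + ((k:ℝ)+1))) y := by
  have hk : (0:ℝ) < (k:ℝ)+1 := by positivity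
  have h1 : HasDerivAt (fun z : ℝ => 1 + z / ((k:ℝ)+1)) (1/((k:ℝ)+1)) y := by
    simpa using ((hasDerivAt_id y).div_const ((k:ℝ)+1)).const_add 1
  have hne : 1 + y / ((k:ℝ)+1) ≠ 0 := by positivity
  have h2 : HasDerivAt (fun z : ℝ => Real.log (1 + z / ((k:ℝ)+1)))
      ((1 + y/((k:ℝ)+1))⁻¹ * (1/((k:ℝ)+1))) y := by
    have := (Real.hasDerivAt_log hne).comp y h1; exact this
  have h3 : HasDerivAt (fun z : ℝ => z / ((k:ℝ)+1) - Real.log (1 + z / ((k:ℝ)+1))) _ y :=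
    ((hasDerivAt_id y).div_const ((k:ℝ)+1)).sub h2
  convert h3 using 1
  congr 1
  rw [eq_comm, inv_mul_eq_div, div_eq_div_iff (by positivity) (by positivity)]
  field_simp
  ring

lemma hasDerivAt_pgA {x : ℝ} (hx : x ∈ Set.Ioo (1/4:ℝ) 1) :
    HasDerivAt pgA (pgT x) x := by
  exact hasDerivAt_tsum_of_isPreconnected
    (u := fun k : ℕ => 1 / ((k:ℝ)+1)^2) (t := Set.Ioo (1/4:ℝ) 1)
    (g := fun (k:ℕ) (z:ℝ) => z/((k:ℝ)+1) - Real.log (1 + z/((k:ℝ)+1)))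
    (g' := fun (k:ℕ) (z:ℝ) => 1/((k:ℝ)+1) - 1/(z+((k:ℝ)+1)))
    pg_sq_summable isOpen_Ioo (convex_Ioo _ _).isPreconnected
    (fun k y hy => hasDerivAt_pgA_term k (by linarith [hy.1]))
    (fun k y hy => by
      have hb := pgT_term_bounds (x := y) (by linarith [hy.1]) (le_of_lt hy.2) k
      rw [Real.norm_eq_abs, abs_of_nonneg hb.1]
      exact hb.2)
    (by norm_num : (1/2:ℝ) ∈ Set.Ioo (1/4:ℝ) 1)
    (pgA_summable (by norm_num)) hx

lemma hasDerivAt_logGamma {x : ℝ} (hx : x ∈ Set.Ioo (1/4:ℝ) 1) :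
    HasDerivAt (fun y : ℝ => Real.log (Real.Gamma y)) (pgPsi x) x := by
  have hx0 : (0:ℝ) < x := by linarith [hx.1]
  have h1 : HasDerivAt (fun y : ℝ => -γ * y) (-γ) x := by
    simpa using (hasDerivAt_id x).const_mul (-γ)
  have h2 : HasDerivAt Real.log x⁻¹ x := Real.hasDerivAt_log hx0.ne'
  have h3 := hasDerivAt_pgA hx
  have hL : HasDerivAt (fun y : ℝ => -γ * y - Real.log y + pgA y) (pgPsi x) x := by
    exact (h1.sub h2).add h3
  apply hL.congr_of_eventuallyEq
  filter_upwards [Ioi_mem_nhds hx0] with y hy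
  exact logGamma_eq hy

lemma hasDerivAt_pgT {x : ℝ} (hx : x ∈ Set.Ioo (1/4:ℝ) 1) :
    HasDerivAt pgT (∑' k : ℕ, 1 / (x + ((k:ℝ)+1))^2) x := by
  refine hasDerivAt_tsum_of_isPreconnected
    (u := fun k : ℕ => 1 / ((k:ℝ)+1)^2) (t := Set.Ioo (1/4:ℝ) 1)
    (g := fun (k:ℕ) (z:ℝ) => 1/((k:ℝ)+1) - 1/(z+((k:ℝ)+1)))
    (g' := fun (k:ℕ) (z:ℝ) => 1/(z+((k:ℝ)+1))^2)
    pg_sq_summable isOpen_Ioo (convex_Ioo _ _).isPreconnected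
    (fun k y hy => ?_) (fun k y hy => ?_)
    (by norm_num : (1/2:ℝ) ∈ Set.Ioo (1/4:ℝ) 1)
    (pgT_summable (by norm_num) (by norm_num)) hx
  · have h0 : (0:ℝ) < y + ((k:ℝ)+1) := by have := hy.1; positivity
    have h1 : HasDerivAt (fun z : ℝ => 1/((k:ℝ)+1) - 1/(z+((k:ℝ)+1))^(0+1)) _ y :=
        (hasDerivAt_pg_term 0 ((k:ℝ)+1) h0).const_sub (1/((k:ℝ)+1))
    have h2 : HasDerivAt (fun z : ℝ => 1/((k:ℝ)+1) - 1/(z+((k:ℝ)+1))^(0+1))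
        (1/(y+((k:ℝ)+1))^2) y := by
      convert h1 using 1
      rw [neg_div, neg_neg]
      norm_num
    simpa using h2
  · have hy1 : (0:ℝ) < y := by linarith [hy.1]
    have h0 : (0:ℝ) < y + ((k:ℝ)+1) := by positivity
    have hk : (0:ℝ) < (k:ℝ)+1 := by positivity
    rw [Real.norm_eq_abs, abs_of_nonneg (by positivity)]
    exact one_div_le_one_div_of_le (by positivity)
      (pow_le_pow_left₀ hk.le (by linarith) 2)

lemma hasDerivAt_pgPsi {x : ℝ} (hx : x ∈ Set.Ioo (1/4:ℝ) 1) :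
    HasDerivAt pgPsi (pgS 2 x) x := by
  have hx0 : (0:ℝ) < x := by linarith [hx.1]
  have h2 : HasDerivAt (fun y : ℝ => y⁻¹) (-(x^2)⁻¹) x := hasDerivAt_inv hx0.ne'
  have hT := hasDerivAt_pgT hx
  have h : HasDerivAt pgPsi _ x := ((hasDerivAt_const x (-γ)).sub h2).add hT
  convert h using 1
  rw [pgS, Summable.tsum_eq_zero_add (pgS_summable le_rfl (le_of_lt hx.1))]
  push_cast
  norm_num

lemma pg_iter (j : ℕ) : ∀ {x : ℝ}, x ∈ Set.Ioo (1/4:ℝ) 1 →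
    iteratedDeriv (j+2) (fun x : ℝ => Real.log (Real.Gamma x)) x
      = (-1)^j * ((j+1).factorial : ℝ) * pgS (j+2) x := by
  induction j with
  | zero =>
    intro x hx
    rw [iteratedDeriv_succ, iteratedDeriv_one]
    have hev : deriv (fun y : ℝ => Real.log (Real.Gamma y)) =ᶠ[𝓝 x] pgPsi := by
      filter_upwards [isOpen_Ioo.mem_nhds hx] with y hy
      exact (hasDerivAt_logGamma hy).deriv
    rw [hev.deriv_eq, (hasDerivAt_pgPsi hx).deriv]
    norm_num
  | succ j ih =>
    intro x hx
    rw [iteratedDeriv_succ]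
    have hev : iteratedDeriv (j+2) (fun y : ℝ => Real.log (Real.Gamma y))
        =ᶠ[𝓝 x] fun y => (-1)^j * ((j+1).factorial : ℝ) * pgS (j+2) y := by
      filter_upwards [isOpen_Ioo.mem_nhds hx] with y hy
      exact ih hy
    rw [hev.deriv_eq]
    have hS := (hasDerivAt_pgS (j+1) (by omega) hx).const_mul ((-1:ℝ)^j * ((j+1).factorial : ℝ))
    rw [hS.deriv]
    push_cast [Nat.factorial_succ]
    ring
  
lemma pg_zeta_half (M : ℕ) (hM : 2 ≤ M) :
    pgS M (1/2) = ((2:ℝ)^M - 1) * ∑' k : ℕ, (1:ℝ)/((k:ℝ)+1)^M := by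
  have h2M : (0:ℝ) < 2^M := by positivity
  have hZs : Summable (fun k : ℕ => (1:ℝ)/((k:ℝ)+1)^M) :=
    (pgS_summable hM (x := 1) (by norm_num)).congr fun k => by rw [add_comm]
  set Z := ∑' k : ℕ, (1:ℝ)/((k:ℝ)+1)^M with hZdef
  have hE : Summable (fun k : ℕ => (1:ℝ)/(2*(k:ℝ)+1)^M) := by
    refine Summable.of_nonneg_of_le (fun k => by positivity) (fun k => ?_) hZs
    have hk : (0:ℝ) < (k:ℝ)+1 := by positivity
    exact one_div_le_one_div_of_le (by positivity)
      (pow_le_pow_left₀ hk.le (by push_cast; linarith [Nat.cast_nonneg (α := ℝ) k]) M)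
  have he : Summable (fun k : ℕ => (1:ℝ)/((↑(2*k):ℝ)+1)^M) := by
    refine hE.congr fun k => ?_
    push_cast
    ring_nf
  have hoeq : ∀ k : ℕ, (1:ℝ)/((↑(2*k+1):ℝ)+1)^M = (2^M)⁻¹ * ((1:ℝ)/((k:ℝ)+1)^M) := by
    intro k
    push_cast
    rw [show (2*(k:ℝ)+1+1) = 2*((k:ℝ)+1) by ring, mul_pow]
    field_simp
  have ho : Summable (fun k : ℕ => (1:ℝ)/((↑(2*k+1):ℝ)+1)^M) := by
    refine ((hZs.mul_left ((2:ℝ)^M)⁻¹).congr fun k => ?_)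
    rw [hoeq k]
  have hsplit := tsum_even_add_odd (f := fun k : ℕ => (1:ℝ)/((k:ℝ)+1)^M) he ho
  have hotsum : ∑' k : ℕ, (1:ℝ)/((↑(2*k+1):ℝ)+1)^M = (2^M)⁻¹ * Z := by
    rw [← tsum_mul_left]
    exact tsum_congr hoeq
  have heeq : ∀ k : ℕ, (1:ℝ)/((↑(2*k):ℝ)+1)^M = (1:ℝ)/(2*(k:ℝ)+1)^M := by
    intro k; push_cast; ring_nf
  have hetsum : ∑' k : ℕ, (1:ℝ)/((↑(2*k):ℝ)+1)^M = ∑' k : ℕ, (1:ℝ)/(2*(k:ℝ)+1)^M :=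
    tsum_congr heeq
  have hkey : ∑' k : ℕ, (1:ℝ)/(2*(k:ℝ)+1)^M = Z - (2^M)⁻¹ * Z := by
    rw [← hetsum]
    have := hsplit
    rw [hotsum] at this
    linarith [this]
  have hpg : pgS M (1/2) = 2^M * ∑' k : ℕ, (1:ℝ)/(2*(k:ℝ)+1)^M := by
    rw [pgS, ← tsum_mul_left]
    refine tsum_congr fun k => ?_
    have hk : (0:ℝ) < 2*(k:ℝ)+1 := by positivity
    rw [show (1/2 + (k:ℝ)) = (2*(k:ℝ)+1)/2 by ring, div_pow, one_div_div, mul_one_div]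
  rw [hpg, hkey]
  field_simp

theorem polygamma_half_zeta_odd (n : ℕ) (hn : 1 ≤ n) :
    iteratedDeriv (2*n+1) (fun x : ℝ => Real.log (Real.Gamma x)) (1/2) =
      -((2^(2*n+1) : ℝ) - 1) * (Nat.factorial (2*n) : ℝ) * ∑' k : ℕ, (1 : ℝ) / (k+1)^(2*n+1) := by
  obtain ⟨p, rfl⟩ : ∃ p, n = p + 1 := ⟨n - 1, by omega⟩
  have hmem : (1/2 : ℝ) ∈ Set.Ioo (1/4:ℝ) 1 := by norm_num
  have h1 : 2*(p+1)+1 = (2*p+1)+2 := by ring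
  rw [h1, pg_iter (2*p+1) hmem, pg_zeta_half (2*p+1+2) (by omega)]
  have hodd : ((-1:ℝ))^(2*p+1) = -1 := Odd.neg_one_pow ⟨p, by ring⟩
  rw [hodd]
  have hfac : (2*p+1+1) = 2*(p+1) := by ring
  rw [hfac]
  push_cast
  ring
end

section
/- For every natural number n ≥ 1 and every real s with 0 < s < 1, the following two identities hold: (i) iteratedDeriv (2n+1) (fun x : ℝ => Real.log (Real.Gamma x)) s = iteratedDeriv (2n+1) (fun x : ℝ => Real.log (Real.Gamma (x/2))) s - iteratedDeriv (2n+1) (fun x : ℝ => Real.log (Real.Gamma ((1-x)/2))) s - iteratedDeriv (2n+1) (fun x : ℝ => Real.log (Real.cos (Real.pi * x / 2))) s; and (ii) iteratedDeriv (2n+1) (fun x : ℝ => Real.log (Real.Gamma (1-x))) s = - iteratedDeriv (2n+1) (fun x : ℝ => Real.log (Real.Gamma (x/2))) s + iteratedDeriv (2n+1) (fun x : ℝ => Real.log (Real.Gamma ((1-x)/2))) s - iteratedDeriv (2n+1) (fun x : ℝ => Real.log (Real.sin (Real.pi * x / 2))) s. -/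
open Real Set

lemma analyticAt_realGamma {x : ℝ} (hx : 0 < x) : AnalyticAt ℝ Real.Gamma x := by
  have hne : Complex.Gamma (x : ℂ) ≠ 0 := by
    rw [Complex.Gamma_ofReal]
    exact_mod_cast (Real.Gamma_pos_of_pos hx).ne'
  have h2 : AnalyticAt ℂ (fun z => (Complex.Gamma z)⁻¹) (x : ℂ) :=
    Complex.differentiable_one_div_Gamma.analyticAt _
  have h1 : AnalyticAt ℂ Complex.Gamma (x : ℂ) := by
    have := h2.inv (inv_ne_zero hne)
    simpa [Pi.inv_def, inv_inv] using this
  have h3 : AnalyticAt ℝ (fun t : ℝ => (Complex.Gamma (t : ℂ)).re) x :=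
    (Complex.reCLM.analyticAt _).comp ((h1.restrictScalars).comp (Complex.ofRealCLM.analyticAt x))
  exact h3.congr (Filter.Eventually.of_forall fun t => by
    simp only []; rw [Complex.Gamma_ofReal, Complex.ofReal_re])

lemma contDiffAt_logGamma_comp {g : ℝ → ℝ} {m : ℕ} {u : ℝ}
    (hg : ContDiffAt ℝ m g u) (hpos : 0 < g u) :
    ContDiffAt ℝ m (fun x => Real.log (Real.Gamma (g x))) u := by
  have h1 : ContDiffAt ℝ m Real.Gamma (g u) := (analyticAt_realGamma hpos).contDiffAt
  have h2 : ContDiffAt ℝ m Real.log (Real.Gamma (g u)) :=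
    Real.contDiffAt_log.mpr (Real.Gamma_pos_of_pos hpos).ne'
  exact h2.comp u (h1.comp u hg)

lemma iteratedDeriv_zero_fun {k : ℕ} {x : ℝ} :
    iteratedDeriv k (fun _ : ℝ => (0:ℝ)) x = 0 := by
  induction k generalizing x with
  | zero => simp
  | succ k ih => rw [iteratedDeriv_succ']; simp only [deriv_const']; exact ih

lemma iteratedDeriv_affine (c d : ℝ) {m : ℕ} (hm : 2 ≤ m) (x : ℝ) :
    iteratedDeriv m (fun u : ℝ => c * u + d) x = 0 := by
  obtain ⟨k, rfl⟩ : ∃ k, m = k + 2 := ⟨m - 2, by omega⟩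
  rw [show k + 2 = (k+1) + 1 from rfl, iteratedDeriv_succ']
  have hd : deriv (fun u : ℝ => c * u + d) = fun _ => c := by
    funext u
    exact (((hasDerivAt_id u).const_mul c).add_const d).deriv.trans (mul_one c)
  rw [hd, iteratedDeriv_succ']
  simp only [deriv_const']
  exact iteratedDeriv_zero_fun

lemma itdw_open {f : ℝ → ℝ} (m : ℕ) {x : ℝ} (hx : x ∈ Set.Ioo (0:ℝ) 1) :
    iteratedDerivWithin m f (Set.Ioo 0 1) x = iteratedDeriv m f x := by
  unfold iteratedDerivWithin iteratedDeriv
  rw [iteratedFDerivWithin_of_isOpen m isOpen_Ioo hx]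

theorem logGamma_deriv_decompositions (n : ℕ) (hn : 1 ≤ n) (s : ℝ)
    (hs0 : 0 < s) (hs1 : s < 1) :
    (iteratedDeriv (2*n+1) (fun x : ℝ => Real.log (Real.Gamma x)) s =
        iteratedDeriv (2*n+1) (fun x : ℝ => Real.log (Real.Gamma (x/2))) s -
          iteratedDeriv (2*n+1) (fun x : ℝ => Real.log (Real.Gamma ((1-x)/2))) s -
          iteratedDeriv (2*n+1) (fun x : ℝ => Real.log (Real.cos (Real.pi * x / 2))) s) ∧
      (iteratedDeriv (2*n+1) (fun x : ℝ => Real.log (Real.Gamma (1-x))) s =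
        - iteratedDeriv (2*n+1) (fun x : ℝ => Real.log (Real.Gamma (x/2))) s +
          iteratedDeriv (2*n+1) (fun x : ℝ => Real.log (Real.Gamma ((1-x)/2))) s -
          iteratedDeriv (2*n+1) (fun x : ℝ => Real.log (Real.sin (Real.pi * x / 2))) s) := by
  set m : ℕ := 2*n+1 with hm_def
  have hm2 : 2 ≤ m := by omega
  have hs : s ∈ Set.Ioo (0:ℝ) 1 := ⟨hs0, hs1⟩
  have hUD : UniqueDiffOn ℝ (Set.Ioo (0:ℝ) 1) := isOpen_Ioo.uniqueDiffOn
  -- positivity facts for u ∈ S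
  have hfacts : ∀ u ∈ Set.Ioo (0:ℝ) 1, 0 < Real.Gamma u ∧ 0 < Real.Gamma (u/2) ∧
      0 < Real.Gamma ((1-u)/2) ∧ 0 < Real.Gamma (u/2 + 1/2) ∧
      0 < Real.cos (Real.pi * u / 2) ∧ 0 < Real.sin (Real.pi * u / 2) ∧
      0 < Real.Gamma (1-u) := by
    intro u hu
    obtain ⟨hu0, hu1⟩ := hu
    refine ⟨Real.Gamma_pos_of_pos hu0, Real.Gamma_pos_of_pos (by linarith),
      Real.Gamma_pos_of_pos (by linarith), Real.Gamma_pos_of_pos (by linarith),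
      Real.cos_pos_of_mem_Ioo ⟨?_, ?_⟩, Real.sin_pos_of_pos_of_lt_pi ?_ ?_,
      Real.Gamma_pos_of_pos (by linarith)⟩
    · nlinarith [Real.pi_pos]
    · nlinarith [Real.pi_pos]
    · nlinarith [Real.pi_pos]
    · nlinarith [Real.pi_pos]
  -- pointwise identity (i)
  have key1 : ∀ u ∈ Set.Ioo (0:ℝ) 1, Real.log (Real.Gamma u) =
      (Real.log (Real.Gamma (u/2)) - Real.log (Real.Gamma ((1-u)/2)) -
        Real.log (Real.cos (Real.pi * u / 2))) + (Real.log 2 * u + (Real.log Real.pi / 2 - Real.log 2)) := by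
    intro u hu
    obtain ⟨hG, hG2, hG3, hG4, hcos, hsin, hG5⟩ := hfacts u hu
    have dup := Real.Gamma_mul_Gamma_add_half (u/2)
    rw [show (2:ℝ) * (u/2) = u by ring] at dup
    have hlogdup : Real.log (Real.Gamma (u/2)) + Real.log (Real.Gamma (u/2 + 1/2)) =
        Real.log (Real.Gamma u) + (1 - u) * Real.log 2 + Real.log Real.pi / 2 := by
      rw [← Real.log_mul hG2.ne' hG4.ne', dup, Real.log_mul (by positivity) (by positivity),
        Real.log_mul hG.ne' (by positivity), Real.log_rpow (by norm_num),
        Real.log_sqrt Real.pi_pos.le]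
    have refl := Real.Gamma_mul_Gamma_one_sub (u/2 + 1/2)
    rw [show (1:ℝ) - (u/2 + 1/2) = (1-u)/2 by ring,
      show Real.pi * (u/2 + 1/2) = Real.pi * u / 2 + Real.pi / 2 by ring,
      Real.sin_add_pi_div_two] at refl
    have hlogrefl : Real.log (Real.Gamma (u/2 + 1/2)) + Real.log (Real.Gamma ((1-u)/2)) =
        Real.log Real.pi - Real.log (Real.cos (Real.pi * u / 2)) := by
      rw [← Real.log_mul hG4.ne' hG3.ne', refl, Real.log_div Real.pi_pos.ne' hcos.ne']
    linarith
  -- pointwise identity (ii)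
  have key2 : ∀ u ∈ Set.Ioo (0:ℝ) 1, Real.log (Real.Gamma (1-u)) =
      ((- Real.log (Real.Gamma (u/2)) + Real.log (Real.Gamma ((1-u)/2))) -
        Real.log (Real.sin (Real.pi * u / 2))) + (-Real.log 2 * u + Real.log Real.pi / 2) := by
    intro u hu
    obtain ⟨hG, hG2, hG3, hG4, hcos, hsin, hG5⟩ := hfacts u hu
    have refl := Real.Gamma_mul_Gamma_one_sub u
    have hsinu : Real.sin (Real.pi * u) =
        2 * Real.sin (Real.pi * u / 2) * Real.cos (Real.pi * u / 2) := by
      rw [← Real.sin_two_mul]; congr 1; ring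
    have hsinupos : 0 < Real.sin (Real.pi * u) := by rw [hsinu]; positivity
    have hlogrefl : Real.log (Real.Gamma u) + Real.log (Real.Gamma (1-u)) =
        Real.log Real.pi - (Real.log 2 + Real.log (Real.sin (Real.pi * u / 2)) +
          Real.log (Real.cos (Real.pi * u / 2))) := by
      rw [← Real.log_mul hG.ne' hG5.ne', refl, Real.log_div Real.pi_pos.ne' hsinupos.ne',
        hsinu, Real.log_mul (by positivity) hcos.ne', Real.log_mul (by norm_num) hsin.ne']
    have h1 := key1 u hu
    linarith
  -- smoothness of the pieces
  have c1 : ContDiffOn ℝ m (fun u : ℝ => Real.log (Real.Gamma (u/2))) (Set.Ioo (0:ℝ) 1) := fun u hu =>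
    (contDiffAt_logGamma_comp (contDiff_id.div_const 2).contDiffAt
      (by linarith [hu.1] : (0:ℝ) < u/2)).contDiffWithinAt
  have c2 : ContDiffOn ℝ m (fun u : ℝ => Real.log (Real.Gamma ((1-u)/2))) (Set.Ioo (0:ℝ) 1) := fun u hu =>
    (contDiffAt_logGamma_comp ((contDiff_const.sub contDiff_id).div_const 2).contDiffAt
      (by linarith [hu.2] : (0:ℝ) < (1-u)/2)).contDiffWithinAt
  have ccos : ContDiffOn ℝ m (fun u : ℝ => Real.log (Real.cos (Real.pi * u / 2))) (Set.Ioo (0:ℝ) 1) := by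
    intro u hu
    have hcos := (hfacts u hu).2.2.2.2.1
    have hinner : ContDiffAt ℝ m (fun u : ℝ => Real.cos (Real.pi * u / 2)) u :=
      (Real.contDiff_cos.comp ((contDiff_const.mul contDiff_id).div_const 2)).contDiffAt
    exact ((Real.contDiffAt_log.mpr hcos.ne').comp u hinner).contDiffWithinAt
  have csin : ContDiffOn ℝ m (fun u : ℝ => Real.log (Real.sin (Real.pi * u / 2))) (Set.Ioo (0:ℝ) 1) := by
    intro u hu
    have hsin := (hfacts u hu).2.2.2.2.2.1
    have hinner : ContDiffAt ℝ m (fun u : ℝ => Real.sin (Real.pi * u / 2)) u :=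
      (Real.contDiff_sin.comp ((contDiff_const.mul contDiff_id).div_const 2)).contDiffAt
    exact ((Real.contDiffAt_log.mpr hsin.ne').comp u hinner).contDiffWithinAt
  have caff : ∀ c d : ℝ, ContDiffOn ℝ m (fun u : ℝ => c * u + d) (Set.Ioo (0:ℝ) 1) :=
    fun c d => ((contDiff_const.mul contDiff_id).add contDiff_const).contDiffOn
  set f1 : ℝ → ℝ := fun u => Real.log (Real.Gamma (u/2)) with hf1
  set f2 : ℝ → ℝ := fun u => Real.log (Real.Gamma ((1-u)/2)) with hf2
  set f3 : ℝ → ℝ := fun u => Real.log (Real.cos (Real.pi * u / 2)) with hf3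
  set fs : ℝ → ℝ := fun u => Real.log (Real.sin (Real.pi * u / 2)) with hfs
  constructor
  · have hEq1 : Set.EqOn (fun x : ℝ => Real.log (Real.Gamma x))
        (((f1 - f2) - f3) + (fun u : ℝ => Real.log 2 * u + (Real.log Real.pi / 2 - Real.log 2)))
        (Set.Ioo (0:ℝ) 1) := fun u hu => key1 u hu
    rw [← itdw_open (f := fun x : ℝ => Real.log (Real.Gamma x)) m hs,
      iteratedDerivWithin_congr hEq1 hs,
      iteratedDerivWithin_add (f := (f1 - f2) - f3) hs hUD ((c1.sub c2).sub ccos s hs) (caff _ _ s hs),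
      iteratedDerivWithin_sub (f := f1 - f2) (g := f3) hs hUD (c1.sub c2 s hs) (ccos s hs),
      iteratedDerivWithin_sub (f := f1) (g := f2) hs hUD (c1 s hs) (c2 s hs),
      itdw_open m hs, itdw_open m hs, itdw_open m hs, itdw_open m hs,
      iteratedDeriv_affine _ _ hm2, add_zero]
  · have hEq2 : Set.EqOn (fun x : ℝ => Real.log (Real.Gamma (1-x)))
        ((((-f1) + f2) - fs) + (fun u : ℝ => -Real.log 2 * u + Real.log Real.pi / 2))
        (Set.Ioo (0:ℝ) 1) := fun u hu => key2 u hu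
    rw [← itdw_open (f := fun x : ℝ => Real.log (Real.Gamma (1-x))) m hs,
      iteratedDerivWithin_congr hEq2 hs,
      iteratedDerivWithin_add (f := (-f1 + f2) - fs) hs hUD ((c1.neg.add c2).sub csin s hs) (caff _ _ s hs),
      iteratedDerivWithin_sub (f := -f1 + f2) (g := fs) hs hUD (c1.neg.add c2 s hs) (csin s hs),
      iteratedDerivWithin_add (f := -f1) (g := f2) hs hUD (c1.neg s hs) (c2 s hs),
      iteratedDerivWithin_neg,
      itdw_open m hs, itdw_open m hs, itdw_open m hs, itdw_open m hs,
      iteratedDeriv_affine _ _ hm2, add_zero]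
end

section
/- For every complex number s with s ≠ -1, s ≠ 0, s ≠ 1 and s ≠ 2, one has ζ(s) · ζ((1-s)/2) · ζ(1 - s/2) · sin(π(s+1)/4) = (2 : ℂ)^(1/2 - s) · ζ(1-s) · ζ((s+1)/2) · ζ(s/2) · sin(π(2-s)/4). (This is the multiplicative form of the identity log(ζ(s)/ζ(1-s)) = log(ζ((s+1)/2)/ζ(1-(s+1)/2) · ζ(s/2)/ζ(1-s/2)) - (s-1/2)·log 2 - log(sin(π(s+1)/4)/sin(π(1-s/2)/2)).) -/
open Complex

lemma key_identity (s : ℂ) (hs : s.im ≠ 0) :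
    riemannZeta s * riemannZeta ((1 - s)/2) * riemannZeta (1 - s/2) *
        Complex.sin ((Real.pi : ℂ) * (s + 1) / 4) =
      (2 : ℂ) ^ (1/2 - s : ℂ) * riemannZeta (1 - s) * riemannZeta ((s + 1)/2) *
        riemannZeta (s/2) * Complex.sin ((Real.pi : ℂ) * (2 - s) / 4) := by
  have hA1 : ∀ n : ℕ, s ≠ -(n:ℂ) := by
    intro n h; apply hs; rw [h]; simp
  have hA2 : s ≠ 1 := by intro h; apply hs; rw [h]; simp
  have hB1 : ∀ n : ℕ, (s+1)/2 ≠ -(n:ℂ) := by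
    intro n h; apply hs
    have : s = -(2*(n:ℂ)) - 1 := by field_simp at h; linear_combination h
    rw [this]; simp
  have hB2 : (s+1)/2 ≠ 1 := by
    intro h; apply hA2
    field_simp at h; linear_combination h
  have hC1 : ∀ n : ℕ, s/2 ≠ -(n:ℂ) := by
    intro n h; apply hs
    have : s = -(2*(n:ℂ)) := by field_simp at h; linear_combination h
    rw [this]; simp
  have hC2 : s/2 ≠ 1 := by
    intro h; apply hs
    have : s = 2 := by field_simp at h; linear_combination h
    rw [this]; simp
  have hA := riemannZeta_one_sub hA1 hA2
  have hB := riemannZeta_one_sub hB1 hB2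
  have hC := riemannZeta_one_sub hC1 hC2
  rw [show (1 - s)/2 = 1 - (s+1)/2 from by ring, hB, hC, hA]
  set P1 := ((2:ℂ) * ↑Real.pi) ^ (-((s+1)/2)) with hP1
  set P2 := ((2:ℂ) * ↑Real.pi) ^ (-(s/2)) with hP2
  set P := ((2:ℂ) * ↑Real.pi) ^ (-s) with hP
  have hπpos := Real.pi_pos
  have h2π : ((2:ℂ) * ↑Real.pi) ≠ 0 := by simp [Real.pi_ne_zero]
  have E1 : P1 * P2 = P * ((2:ℂ) * ↑Real.pi) ^ (-(1/2) : ℂ) := by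
    rw [hP1, hP2, hP, ← cpow_add _ _ h2π, ← cpow_add _ _ h2π]
    congr 1; ring
  have E2 : Complex.Gamma (s/2) * Complex.Gamma ((s+1)/2)
      = Complex.Gamma s * (2:ℂ) ^ (1 - s) * (↑(Real.sqrt Real.pi) : ℂ) := by
    have h := Complex.Gamma_mul_Gamma_add_half (s/2)
    rw [show s/2 + 1/2 = (s+1)/2 from by ring, show (2:ℂ) * (s/2) = s from by ring] at h
    exact h
  have E3 : Complex.sin (↑Real.pi * (s + 1) / 4) * Complex.cos (↑Real.pi * ((s+1)/2) / 2)
      = Complex.cos (↑Real.pi * s / 2) / 2 := by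
    have h := Complex.sin_two_mul (↑Real.pi * (s + 1) / 4)
    rw [show (2:ℂ) * (↑Real.pi * (s + 1) / 4) = ↑Real.pi * s / 2 + ↑Real.pi / 2 from by ring,
      Complex.sin_add_pi_div_two] at h
    rw [show (↑Real.pi * ((s+1)/2) / 2 : ℂ) = ↑Real.pi * (s + 1) / 4 from by ring]
    linear_combination -h / 2
  have E4 : Complex.sin (↑Real.pi * (2 - s) / 4) = Complex.cos (↑Real.pi * (s/2) / 2) := by
    rw [show (↑Real.pi * (2 - s) / 4 : ℂ) = ↑Real.pi / 2 - ↑Real.pi * (s/2) / 2 from by ring,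
      Complex.sin_pi_div_two_sub]
  have E5 : ((2:ℂ) * ↑Real.pi) ^ (-(1/2) : ℂ) * (↑(Real.sqrt Real.pi) : ℂ)
      = (2:ℂ) ^ (-(1/2) : ℂ) := by
    rw [show ((2:ℂ) * ↑Real.pi) = ((2:ℝ):ℂ) * (↑Real.pi) from by norm_num,
      Complex.mul_cpow_ofReal_nonneg (by norm_num) hπpos.le]
    have hπ : (↑Real.pi : ℂ) ^ (-(1/2) : ℂ) * (↑(Real.sqrt Real.pi) : ℂ) = 1 := by
      rw [show (-(1/2) : ℂ) = ((-(1/2) : ℝ) : ℂ) from by norm_num,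
        ← Complex.ofReal_cpow hπpos.le, ← Complex.ofReal_mul]
      norm_cast
      rw [Real.sqrt_eq_rpow, ← Real.rpow_add hπpos]
      norm_num
    calc ((2:ℝ):ℂ) ^ (-(1/2):ℂ) * (↑Real.pi : ℂ) ^ (-(1/2):ℂ) * (↑(Real.sqrt Real.pi) : ℂ)
        = ((2:ℝ):ℂ) ^ (-(1/2):ℂ) * ((↑Real.pi : ℂ) ^ (-(1/2):ℂ) * ↑(Real.sqrt Real.pi)) := by ring
      _ = (2:ℂ) ^ (-(1/2):ℂ) := by rw [hπ]; push_cast; ring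
  have E6 : (2:ℂ) ^ (-(1/2) : ℂ) * (2:ℂ) ^ (1 - s) = (2:ℂ) ^ (1/2 - s : ℂ) := by
    rw [← cpow_add _ _ (two_ne_zero)]
    congr 1; ring
  -- abbreviations for linear_combination
  set Z1 := riemannZeta s
  set Z2 := riemannZeta ((s+1)/2)
  set Z3 := riemannZeta (s/2)
  set G := Complex.Gamma s
  set G1 := Complex.Gamma ((s+1)/2)
  set G2 := Complex.Gamma (s/2)
  set C := Complex.cos (↑Real.pi * s / 2)
  set C1 := Complex.cos (↑Real.pi * ((s+1)/2) / 2)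
  set C2 := Complex.cos (↑Real.pi * (s/2) / 2)
  set S1 := Complex.sin (↑Real.pi * (s + 1) / 4)
  set S2 := Complex.sin (↑Real.pi * (2 - s) / 4)
  set Q := ((2:ℂ) * ↑Real.pi) ^ (-(1/2) : ℂ)
  set R := (↑(Real.sqrt Real.pi) : ℂ)
  set T := (2:ℂ) ^ (1 - s)
  set Qt := (2:ℂ) ^ (-(1/2) : ℂ)
  set W := (2:ℂ) ^ (1/2 - s : ℂ)
  linear_combination (4 * C1 * S1 * C2 * G1 * G2 * Z1 * Z2 * Z3) * E1
    + (4 * P * Q * S1 * C1 * C2 * Z1 * Z2 * Z3) * E2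
    + (4 * P * Q * G * T * R * C2 * Z1 * Z2 * Z3) * E3
    - (2 * W * P * G * C * Z1 * Z2 * Z3) * E4
    + (2 * P * G * C * C2 * T * Z1 * Z2 * Z3) * E5
    + (2 * P * G * C * C2 * Z1 * Z2 * Z3) * E6


theorem zeta_ratio_half_decomposition (s : ℂ) (hm1 : s ≠ -1) (h0 : s ≠ 0) (h1 : s ≠ 1)
    (h2 : s ≠ 2) :
    riemannZeta s * riemannZeta ((1 - s)/2) * riemannZeta (1 - s/2) *
        Complex.sin ((Real.pi : ℂ) * (s + 1) / 4) =
      (2 : ℂ) ^ (1/2 - s : ℂ) * riemannZeta (1 - s) * riemannZeta ((s + 1)/2) *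
        riemannZeta (s/2) * Complex.sin ((Real.pi : ℂ) * (2 - s) / 4) := by
  set f : ℂ → ℂ := fun z => riemannZeta z * riemannZeta ((1 - z)/2) * riemannZeta (1 - z/2) *
      Complex.sin ((Real.pi : ℂ) * (z + 1) / 4) with hf_def
  set g : ℂ → ℂ := fun z => (2 : ℂ) ^ (1/2 - z : ℂ) * riemannZeta (1 - z) *
      riemannZeta ((z + 1)/2) * riemannZeta (z/2) *
      Complex.sin ((Real.pi : ℂ) * (2 - z) / 4) with hg_def
  set U : Set ℂ := ({-1, 0, 1, 2} : Set ℂ)ᶜ with hU_def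
  have hopen : IsOpen U := (Set.toFinite ({-1, 0, 1, 2} : Set ℂ)).isClosed.isOpen_compl
  have hconn : IsPreconnected U :=
    ((Set.toFinite ({-1, 0, 1, 2} : Set ℂ)).countable.isConnected_compl_of_one_lt_rank
      (by rw [Complex.rank_real_complex]; norm_num)).isPreconnected
  have hf : AnalyticOnNhd ℂ f U := by
    apply DifferentiableOn.analyticOnNhd _ hopen
    intro z hz
    simp only [hU_def, Set.mem_compl_iff, Set.mem_insert_iff, Set.mem_singleton_iff,
      not_or] at hz
    obtain ⟨hz1, hz2, hz3, hz4⟩ := hz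
    apply DifferentiableAt.differentiableWithinAt
    apply DifferentiableAt.mul
    apply DifferentiableAt.mul
    apply DifferentiableAt.mul
    · exact differentiableAt_riemannZeta hz3
    · exact (differentiableAt_riemannZeta (by
        intro h; apply hz1; field_simp at h; linear_combination -h)).comp z (by fun_prop)
    · exact (differentiableAt_riemannZeta (by
        intro h; apply hz2; field_simp at h; linear_combination -h)).comp z (by fun_prop)
    · exact Complex.differentiable_sin.differentiableAt.comp z (by fun_prop)
  have hg : AnalyticOnNhd ℂ g U := by
    apply DifferentiableOn.analyticOnNhd _ hopen
    intro z hz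
    simp only [hU_def, Set.mem_compl_iff, Set.mem_insert_iff, Set.mem_singleton_iff,
      not_or] at hz
    obtain ⟨hz1, hz2, hz3, hz4⟩ := hz
    apply DifferentiableAt.differentiableWithinAt
    apply DifferentiableAt.mul
    apply DifferentiableAt.mul
    apply DifferentiableAt.mul
    apply DifferentiableAt.mul
    · exact ((differentiableAt_id.const_sub _).const_cpow (Or.inl two_ne_zero))
    · exact (differentiableAt_riemannZeta (by
        intro h; apply hz2; linear_combination -h)).comp z (by fun_prop)
    · exact (differentiableAt_riemannZeta (by
        intro h; apply hz3; field_simp at h; linear_combination h)).comp z (by fun_prop)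
    · exact (differentiableAt_riemannZeta (by
        intro h; apply hz4; field_simp at h; linear_combination h)).comp z (by fun_prop)
    · exact Complex.differentiable_sin.differentiableAt.comp z (by fun_prop)
  have hI : Complex.I ∈ U := by
    simp only [hU_def, Set.mem_compl_iff, Set.mem_insert_iff, Set.mem_singleton_iff, not_or]
    refine ⟨?_, ?_, ?_, ?_⟩ <;> (intro h; simpa [Complex.ext_iff] using h)
  have hfg : f =ᶠ[nhds Complex.I] g := by
    have hopen' : IsOpen {z : ℂ | z.im ≠ 0} :=
      isOpen_compl_singleton.preimage Complex.continuous_im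
    filter_upwards [hopen'.mem_nhds (by simp : Complex.I ∈ {z : ℂ | z.im ≠ 0})] with z hz
    exact key_identity z hz
  have := hf.eqOn_of_preconnected_of_eventuallyEq hg hconn hI hfg
  have hsU : s ∈ U := by
    simp only [hU_def, Set.mem_compl_iff, Set.mem_insert_iff, Set.mem_singleton_iff, not_or]
    exact ⟨hm1, h0, h1, h2⟩
  exact this hsU
end

section
/- For every complex number s with s ≠ -1, s ≠ 0 and s ≠ 1, one has ζ(1+s)^2 · ζ(1-s)^2 · s^2 · sin(π(s+2)/4) · sin(π·s/4) · sin(π(2-s)/4) · sin(π(4-s)/4) = (2·π·I)^2 · ζ(s)^2 · ζ(-s)^2 · sin(π(s+1)/4) · sin(π(s-1)/4) · sin(π(1-s)/4) · sin(π(3-s)/4). (This is the multiplicative form of the identity log(ζ^2(1+s)/ζ^2(-s)) = -log(ζ^2(1-s)/ζ^2(s)) - log(s^2/(2πi)^2) - log(sin(π(s+2)/4)/sin(π(1-s)/4)) + log(sin(π(s+1)/4)/sin(π(2-s)/4)) - log(sin(πs/4)/sin(π(3-s)/4)) + log(sin(π(s-1)/4)/sin(π(4-s)/4)).) -/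
open Complex

private lemma zeta_cast_zero (x : ℂ) (m : ℤ) (hx : x = (m : ℂ)) (hm : m ≤ -2)
    (he : 2 ∣ m) : riemannZeta x = 0 := by
  obtain ⟨k, hk⟩ : ∃ k : ℕ, m = -2 * (k + 1) := ⟨(-(m / 2) - 1).toNat, by omega⟩
  have : x = -2 * ((k : ℂ) + 1) := by rw [hx, hk]; push_cast; ring
  rw [this]
  exact riemannZeta_neg_two_mul_nat_add_one k

private lemma sin_cast_zero (x : ℂ) (k : ℤ) (h : x = (k : ℂ) * (Real.pi : ℂ)) :
    Complex.sin x = 0 :=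
  Complex.sin_eq_zero_iff.mpr ⟨k, h⟩

theorem zeta_sq_reflection_identity (s : ℂ) (hm1 : s ≠ -1) (h0 : s ≠ 0) (h1 : s ≠ 1) :
    riemannZeta (1 + s)^2 * riemannZeta (1 - s)^2 * s^2 *
        Complex.sin ((Real.pi : ℂ) * (s + 2) / 4) *
        Complex.sin ((Real.pi : ℂ) * s / 4) *
        Complex.sin ((Real.pi : ℂ) * (2 - s) / 4) *
        Complex.sin ((Real.pi : ℂ) * (4 - s) / 4) =
      (2 * (Real.pi : ℂ) * Complex.I)^2 * riemannZeta s^2 * riemannZeta (-s)^2 *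
        Complex.sin ((Real.pi : ℂ) * (s + 1) / 4) *
        Complex.sin ((Real.pi : ℂ) * (s - 1) / 4) *
        Complex.sin ((Real.pi : ℂ) * (1 - s) / 4) *
        Complex.sin ((Real.pi : ℂ) * (3 - s) / 4) := by
  by_cases hint : ∃ n : ℤ, s = (n : ℂ)
  · obtain ⟨n, rfl⟩ := hint
    have hn1 : n ≠ -1 := by rintro rfl; exact hm1 (by norm_num)
    have hn0 : n ≠ 0 := by rintro rfl; exact h0 (by norm_num)
    have hn2 : n ≠ 1 := by rintro rfl; exact h1 (by norm_num)
    rcases (by omega : n % 4 = 0 ∨ n % 4 = 1 ∨ n % 4 = 2 ∨ n % 4 = 3) with h | h | h | h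
    · have hL : Complex.sin ((Real.pi : ℂ) * (n : ℂ) / 4) = 0 :=
        sin_cast_zero _ (n / 4) (by
          rw [show ((n : ℤ) : ℂ) = 4 * ((n / 4 : ℤ) : ℂ) by exact_mod_cast (by omega : n = 4 * (n/4))]
          ring)
      rcases le_or_gt n 0 with hn | hn
      · have hR : riemannZeta ((n : ℤ) : ℂ) = 0 :=
          zeta_cast_zero _ n rfl (by omega) (by omega)
        rw [hL, hR]; ring
      · have hR : riemannZeta (-((n : ℤ) : ℂ)) = 0 :=
          zeta_cast_zero _ (-n) (by push_cast; ring) (by omega) (by omega)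
        rw [hL, hR]; ring
    · have hR : Complex.sin ((Real.pi : ℂ) * ((n : ℂ) - 1) / 4) = 0 :=
        sin_cast_zero _ ((n - 1) / 4) (by
          rw [show ((n : ℤ) : ℂ) - 1 = 4 * (((n - 1) / 4 : ℤ) : ℂ) by exact_mod_cast (by omega : n - 1 = 4 * ((n-1)/4))]
          ring)
      rcases le_or_gt n 0 with hn | hn
      · have hL : riemannZeta (1 + ((n : ℤ) : ℂ)) = 0 :=
          zeta_cast_zero _ (1 + n) (by push_cast; ring) (by omega) (by omega)
        rw [hL, hR]; ring
      · have hL : riemannZeta (1 - ((n : ℤ) : ℂ)) = 0 :=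
          zeta_cast_zero _ (1 - n) (by push_cast; ring) (by omega) (by omega)
        rw [hL, hR]; ring
    · have hL : Complex.sin ((Real.pi : ℂ) * ((n : ℂ) + 2) / 4) = 0 :=
        sin_cast_zero _ ((n + 2) / 4) (by
          rw [show ((n : ℤ) : ℂ) + 2 = 4 * (((n + 2) / 4 : ℤ) : ℂ) by exact_mod_cast (by omega : n + 2 = 4 * ((n+2)/4))]
          ring)
      rcases le_or_gt n 0 with hn | hn
      · have hR : riemannZeta ((n : ℤ) : ℂ) = 0 :=
          zeta_cast_zero _ n rfl (by omega) (by omega)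
        rw [hL, hR]; ring
      · have hR : riemannZeta (-((n : ℤ) : ℂ)) = 0 :=
          zeta_cast_zero _ (-n) (by push_cast; ring) (by omega) (by omega)
        rw [hL, hR]; ring
    · have hR : Complex.sin ((Real.pi : ℂ) * ((n : ℂ) + 1) / 4) = 0 :=
        sin_cast_zero _ ((n + 1) / 4) (by
          rw [show ((n : ℤ) : ℂ) + 1 = 4 * (((n + 1) / 4 : ℤ) : ℂ) by exact_mod_cast (by omega : n + 1 = 4 * ((n+1)/4))]
          ring)
      rcases le_or_gt n 0 with hn | hn
      · have hL : riemannZeta (1 + ((n : ℤ) : ℂ)) = 0 :=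
          zeta_cast_zero _ (1 + n) (by push_cast; ring) (by omega) (by omega)
        rw [hL, hR]; ring
      · have hL : riemannZeta (1 - ((n : ℤ) : ℂ)) = 0 :=
          zeta_cast_zero _ (1 - n) (by push_cast; ring) (by omega) (by omega)
        rw [hL, hR]; ring
  · -- non-integer case
    have hs : ∀ k : ℤ, s ≠ (k : ℂ) := by push_neg at hint; exact hint
    have hpi : (Real.pi : ℂ) ≠ 0 := by exact_mod_cast Real.pi_ne_zero
    have h2pi : (2 : ℂ) * (Real.pi : ℂ) ≠ 0 := by simp [hpi]
    have hsinpis : Complex.sin ((Real.pi : ℂ) * s) ≠ 0 := by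
      rw [Complex.sin_ne_zero_iff]
      intro k hk
      exact hs k (mul_left_cancel₀ hpi (by rw [hk]; ring))
    have hNat : ∀ n : ℕ, s ≠ -(n : ℂ) := fun n hn => hs (-(n : ℤ)) (by push_cast; exact hn)
    have hNat' : ∀ n : ℕ, -s ≠ -(n : ℂ) := fun n hn =>
      hs n (by simpa using congrArg Neg.neg hn)
    have hFE1 := riemannZeta_one_sub hNat h1
    have hFE2 := riemannZeta_one_sub (s := -s) hNat' (by
      intro hh; exact hm1 (neg_eq_iff_eq_neg.mp hh))
    rw [sub_neg_eq_add, neg_neg] at hFE2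
    rw [show (Real.pi : ℂ) * -s / 2 = -((Real.pi : ℂ) * s / 2) by ring, Complex.cos_neg] at hFE2
    have hpow : (2 * (Real.pi : ℂ)) ^ s * (2 * (Real.pi : ℂ)) ^ (-s) = 1 := by
      rw [← Complex.cpow_add _ _ h2pi]; simp
    have hA := Complex.Gamma_mul_Gamma_one_sub s
    have hB : Complex.Gamma (1 - s) = -s * Complex.Gamma (-s) := by
      rw [show (1 : ℂ) - s = -s + 1 by ring, Complex.Gamma_add_one _ (neg_ne_zero.mpr h0)]
    have hGG : Complex.Gamma s * Complex.Gamma (-s) * s * Complex.sin ((Real.pi : ℂ) * s)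
        = -(Real.pi : ℂ) := by
      rw [hB] at hA
      rw [eq_div_iff hsinpis] at hA
      linear_combination -hA
    have key : riemannZeta (1 + s) * riemannZeta (1 - s) * s * Complex.sin ((Real.pi : ℂ) * s)
        = -4 * (Real.pi : ℂ) * Complex.cos ((Real.pi : ℂ) * s / 2) ^ 2
          * riemannZeta s * riemannZeta (-s) := by
      rw [hFE1, hFE2]
      linear_combination (4 * Complex.Gamma s * Complex.Gamma (-s)
          * Complex.cos ((Real.pi : ℂ) * s / 2) ^ 2 * riemannZeta s * riemannZeta (-s) * s
          * Complex.sin ((Real.pi : ℂ) * s)) * hpow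
        + (4 * Complex.cos ((Real.pi : ℂ) * s / 2) ^ 2 * riemannZeta s * riemannZeta (-s)) * hGG
    set S := Complex.sin ((Real.pi : ℂ) * s / 4) with hS
    set C := Complex.cos ((Real.pi : ℂ) * s / 4) with hC
    set p := Complex.sin ((Real.pi : ℂ) / 4) with hp
    have hc : Complex.cos ((Real.pi : ℂ) * s / 2) = 2 * C ^ 2 - 1 := by
      rw [show (Real.pi : ℂ) * s / 2 = 2 * ((Real.pi : ℂ) * s / 4) by ring, Complex.cos_two_mul]
    have hsf : Complex.sin ((Real.pi : ℂ) * s) = 2 * (2 * S * C) * (2 * C ^ 2 - 1) := by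
      rw [show (Real.pi : ℂ) * s = 2 * ((Real.pi : ℂ) * s / 2) by ring, Complex.sin_two_mul, hc,
        show (Real.pi : ℂ) * s / 2 = 2 * ((Real.pi : ℂ) * s / 4) by ring, Complex.sin_two_mul]
    have hq : Complex.cos ((Real.pi : ℂ) / 4) = p := by
      rw [hp, ← Complex.sin_pi_div_two_sub,
        show (Real.pi : ℂ) / 2 - (Real.pi : ℂ) / 4 = (Real.pi : ℂ) / 4 by ring]
    have hp2 : p ^ 2 = 1 / 2 := by
      have h := Complex.sin_sq_add_cos_sq ((Real.pi : ℂ) / 4)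
      rw [hq] at h
      linear_combination h / 2
    have hpy : S ^ 2 + C ^ 2 = 1 := Complex.sin_sq_add_cos_sq _
    have hcne : (2 * C ^ 2 - 1 : ℂ) ≠ 0 := by
      rw [← hc]
      intro hzz
      rw [Complex.cos_eq_zero_iff] at hzz
      obtain ⟨k, hk⟩ := hzz
      refine hs (2 * k + 1) (mul_left_cancel₀ hpi ?_)
      push_cast
      linear_combination 2 * hk
    rw [hsf, hc] at key
    have hT : (S * Complex.cos ((Real.pi : ℂ) / 4) + C * p)
          * (S * Complex.cos ((Real.pi : ℂ) / 4) - C * p)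
          * (p * C - Complex.cos ((Real.pi : ℂ) / 4) * S)
          * (S * Complex.cos ((Real.pi : ℂ) / 4) + C * p)
        = -(2 * C ^ 2 - 1) ^ 2 / 4 := by
      rw [hq]
      have hp4 : p ^ 4 = 1 / 4 := by linear_combination (p ^ 2 + 1 / 2) * hp2
      linear_combination (-(S + C) ^ 2 * (S - C) ^ 2) * hp4
        + ((3 * C ^ 2 - S ^ 2 - 1) / 4) * hpy
    have hIpow : (2 * (Real.pi : ℂ) * Complex.I) ^ 2 = -(4 * (Real.pi : ℂ) ^ 2) := by
      rw [mul_pow, Complex.I_sq]; ring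
    rw [show (Real.pi : ℂ) * (s + 2) / 4 = (Real.pi : ℂ) * s / 4 + (Real.pi : ℂ) / 2 by ring,
      Complex.sin_add_pi_div_two,
      show (Real.pi : ℂ) * (2 - s) / 4 = (Real.pi : ℂ) / 2 - (Real.pi : ℂ) * s / 4 by ring,
      Complex.sin_pi_div_two_sub,
      show (Real.pi : ℂ) * (4 - s) / 4 = (Real.pi : ℂ) - (Real.pi : ℂ) * s / 4 by ring,
      Complex.sin_pi_sub,
      show (Real.pi : ℂ) * (3 - s) / 4
        = (Real.pi : ℂ) - ((Real.pi : ℂ) * s / 4 + (Real.pi : ℂ) / 4) by ring,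
      Complex.sin_pi_sub,
      show (Real.pi : ℂ) * (s + 1) / 4 = (Real.pi : ℂ) * s / 4 + (Real.pi : ℂ) / 4 by ring,
      show (Real.pi : ℂ) * (s - 1) / 4 = (Real.pi : ℂ) * s / 4 - (Real.pi : ℂ) / 4 by ring,
      show (Real.pi : ℂ) * (1 - s) / 4 = (Real.pi : ℂ) / 4 - (Real.pi : ℂ) * s / 4 by ring,
      hIpow]
    simp only [Complex.sin_add, Complex.sin_sub, ← hS, ← hC, ← hp]
    refine mul_left_cancel₀ (pow_ne_zero 2 hcne) ?_
    linear_combination ((riemannZeta (1 + s) * riemannZeta (1 - s) * s * S * C * (2 * C ^ 2 - 1)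
        - (Real.pi : ℂ) * (2 * C ^ 2 - 1) ^ 2 * riemannZeta s * riemannZeta (-s)) / 4) * key
      + (4 * (Real.pi : ℂ) ^ 2 * (2 * C ^ 2 - 1) ^ 2 * riemannZeta s ^ 2
        * riemannZeta (-s) ^ 2) * hT
end

section
/- For every complex number s with s ∉ {-5, -4, -3, 3, 4, 5}, one has ζ(-3-s) · ζ(4-s) · ζ(s-4) · ζ(5+s) · (s+4) = ζ(s+4) · ζ(s-3) · ζ(5-s) · ζ(-s-4) · (s-4). (This is the multiplicative form of the identity -log(ζ(s+4)/ζ(-3-s)) + log(ζ(-s+4)/ζ(-3+s)) = -log(ζ(s-4)/ζ(5-s)) + log(ζ(-s-4)/ζ(5+s)) + log((s-4)/(s+4)).) -/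
open Complex Real

lemma zeta_int_zero (k : ℤ) (h2 : k ≤ -2) (he : k % 2 = 0) :
    riemannZeta (k : ℂ) = 0 := by
  obtain ⟨n, hn⟩ : ∃ n : ℕ, k = -2 * ((n : ℤ) + 1) := by
    refine ⟨((-k - 2) / 2).toNat, by omega⟩
  have := riemannZeta_neg_two_mul_nat_add_one n
  rw [hn]
  push_cast
  exact this

theorem zeta_shift_four_identity (s : ℂ)
    (hs : s ∉ ({-5, -4, -3, 3, 4, 5} : Set ℂ)) :
    riemannZeta (-3 - s) * riemannZeta (4 - s) * riemannZeta (s - 4) * riemannZeta (5 + s) *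
        (s + 4) =
      riemannZeta (s + 4) * riemannZeta (s - 3) * riemannZeta (5 - s) * riemannZeta (-s - 4) *
        (s - 4) := by
  simp only [Set.mem_insert_iff, Set.mem_singleton_iff, not_or] at hs
  obtain ⟨q1, q2, q3, q4, q5, q6⟩ := hs
  by_cases hint : ∃ m : ℤ, s = (m : ℂ)
  · obtain ⟨m, rfl⟩ := hint
    have m1 : m ≠ -5 := by intro h; exact q1 (by rw [h]; push_cast; ring)
    have m2 : m ≠ -4 := by intro h; exact q2 (by rw [h]; push_cast; ring)
    have m3 : m ≠ -3 := by intro h; exact q3 (by rw [h]; push_cast; ring)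
    have m4 : m ≠ 3 := by intro h; exact q4 (by rw [h]; push_cast; ring)
    have m5 : m ≠ 4 := by intro h; exact q5 (by rw [h]; push_cast; ring)
    have m6 : m ≠ 5 := by intro h; exact q6 (by rw [h]; push_cast; ring)
    have zl : riemannZeta (-3 - (m : ℂ)) * riemannZeta (4 - (m : ℂ)) *
        riemannZeta ((m : ℂ) - 4) * riemannZeta (5 + (m : ℂ)) = 0 := by
      rcases Int.emod_two_eq_zero_or_one m with hp | hp
      · rcases le_or_gt m 2 with h | h
        · have z := zeta_int_zero (m - 4) (by omega) (by omega)
          push_cast at z; simp [z]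
        · have z := zeta_int_zero (4 - m) (by omega) (by omega)
          push_cast at z; simp [z]
      · rcases le_or_gt m (-7) with h | h
        · have z := zeta_int_zero (5 + m) (by omega) (by omega)
          push_cast at z; simp [z]
        · have z := zeta_int_zero (-3 - m) (by omega) (by omega)
          push_cast at z; simp [z]
    have zr : riemannZeta ((m : ℂ) + 4) * riemannZeta ((m : ℂ) - 3) *
        riemannZeta (5 - (m : ℂ)) * riemannZeta (-(m : ℂ) - 4) = 0 := by
      rcases Int.emod_two_eq_zero_or_one m with hp | hp
      · rcases le_or_gt m (-6) with h | h
        · have z := zeta_int_zero (m + 4) (by omega) (by omega)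
          push_cast at z; simp [z]
        · have z := zeta_int_zero (-m - 4) (by omega) (by omega)
          push_cast at z; simp [z]
      · rcases le_or_gt m 1 with h | h
        · have z := zeta_int_zero (m - 3) (by omega) (by omega)
          push_cast at z; simp [z]
        · have z := zeta_int_zero (5 - m) (by omega) (by omega)
          push_cast at z; simp [z]
    rw [zl, zr, zero_mul, zero_mul]
  · push_neg at hint
    have hni : ∀ m : ℤ, s ≠ (m : ℂ) := hint
    have hpi : ((π : ℝ) : ℂ) ≠ 0 := by exact_mod_cast Real.pi_ne_zero
    have h2pi : (2 * ((π : ℝ) : ℂ)) ≠ 0 := mul_ne_zero two_ne_zero hpi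
    -- hypotheses for the functional equation
    have hA : ∀ n : ℕ, (s + 4) ≠ -(n : ℂ) := fun n h =>
      hni (-(n : ℤ) - 4) (by push_cast; linear_combination h)
    have hA1 : (s + 4) ≠ 1 := fun h => hni (-3) (by push_cast; linear_combination h)
    have hB : ∀ n : ℕ, (s - 3) ≠ -(n : ℂ) := fun n h =>
      hni (-(n : ℤ) + 3) (by push_cast; linear_combination h)
    have hB1 : (s - 3) ≠ 1 := fun h => hni 4 (by push_cast; linear_combination h)
    have hC : ∀ n : ℕ, (5 - s) ≠ -(n : ℂ) := fun n h =>
      hni ((n : ℤ) + 5) (by push_cast; linear_combination -h)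
    have hC1 : (5 - s) ≠ 1 := fun h => hni 4 (by push_cast; linear_combination -h)
    have hD : ∀ n : ℕ, (-s - 4) ≠ -(n : ℂ) := fun n h =>
      hni ((n : ℤ) - 4) (by push_cast; linear_combination -h)
    have hD1 : (-s - 4) ≠ 1 := fun h => hni (-5) (by push_cast; linear_combination -h)
    have e1 : riemannZeta (-3 - s) = 2 * (2 * ((π : ℝ) : ℂ)) ^ (-(s + 4)) *
        Complex.Gamma (s + 4) * Complex.cos (((π : ℝ) : ℂ) * (s + 4) / 2) *
        riemannZeta (s + 4) := by
      rw [show (-3 - s : ℂ) = 1 - (s + 4) by ring]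
      exact riemannZeta_one_sub hA hA1
    have e2 : riemannZeta (4 - s) = 2 * (2 * ((π : ℝ) : ℂ)) ^ (-(s - 3)) *
        Complex.Gamma (s - 3) * Complex.cos (((π : ℝ) : ℂ) * (s - 3) / 2) *
        riemannZeta (s - 3) := by
      rw [show (4 - s : ℂ) = 1 - (s - 3) by ring]
      exact riemannZeta_one_sub hB hB1
    have e3 : riemannZeta (s - 4) = 2 * (2 * ((π : ℝ) : ℂ)) ^ (-(5 - s)) *
        Complex.Gamma (5 - s) * Complex.cos (((π : ℝ) : ℂ) * (5 - s) / 2) *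
        riemannZeta (5 - s) := by
      rw [show (s - 4 : ℂ) = 1 - (5 - s) by ring]
      exact riemannZeta_one_sub hC hC1
    have e4 : riemannZeta (5 + s) = 2 * (2 * ((π : ℝ) : ℂ)) ^ (-(-s - 4)) *
        Complex.Gamma (-s - 4) * Complex.cos (((π : ℝ) : ℂ) * (-s - 4) / 2) *
        riemannZeta (-s - 4) := by
      rw [show (5 + s : ℂ) = 1 - (-s - 4) by ring]
      exact riemannZeta_one_sub hD hD1
    set c := Complex.cos (((π : ℝ) : ℂ) * s / 2) with hcdef
    set d := Complex.sin (((π : ℝ) : ℂ) * s / 2) with hddef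
    have hS : Complex.sin (((π : ℝ) : ℂ) * s) ≠ 0 := by
      rw [Ne, Complex.sin_eq_zero_iff]
      rintro ⟨k, hk⟩
      apply hni k
      rw [mul_comm ((k : ℂ)) (((π : ℝ) : ℂ))] at hk
      exact mul_left_cancel₀ hpi hk
    have hsin2 : Complex.sin (((π : ℝ) : ℂ) * s) = 2 * d * c := by
      rw [show ((π : ℝ) : ℂ) * s = 2 * (((π : ℝ) : ℂ) * s / 2) by ring, Complex.sin_two_mul]
    have hc4 : Complex.cos (((π : ℝ) : ℂ) * (s + 4) / 2) = c := by
      rw [show ((π : ℝ) : ℂ) * (s + 4) / 2 = ((π : ℝ) : ℂ) * s / 2 + 2 * ((π : ℝ) : ℂ) by ring,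
        Complex.cos_add_two_pi]
    have hc3 : Complex.cos (((π : ℝ) : ℂ) * (s - 3) / 2) = -d := by
      rw [show ((π : ℝ) : ℂ) * (s - 3) / 2 =
        (((π : ℝ) : ℂ) * s / 2 + ((π : ℝ) : ℂ) / 2) - 2 * ((π : ℝ) : ℂ) by ring,
        Complex.cos_sub_two_pi, Complex.cos_add_pi_div_two]
    have hc5 : Complex.cos (((π : ℝ) : ℂ) * (5 - s) / 2) = d := by
      rw [show ((π : ℝ) : ℂ) * (5 - s) / 2 =
        (((π : ℝ) : ℂ) / 2 - ((π : ℝ) : ℂ) * s / 2) + 2 * ((π : ℝ) : ℂ) by ring,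
        Complex.cos_add_two_pi, Complex.cos_pi_div_two_sub]
    have hcm4 : Complex.cos (((π : ℝ) : ℂ) * (-s - 4) / 2) = c := by
      rw [show ((π : ℝ) : ℂ) * (-s - 4) / 2 = -(((π : ℝ) : ℂ) * s / 2 + 2 * ((π : ℝ) : ℂ)) by ring,
        Complex.cos_neg, Complex.cos_add_two_pi]
    have e1s : Complex.sin (((π : ℝ) : ℂ) * (s + 4)) = Complex.sin (((π : ℝ) : ℂ) * s) := by
      rw [show ((π : ℝ) : ℂ) * (s + 4) =
        (((π : ℝ) : ℂ) * s + 2 * ((π : ℝ) : ℂ)) + 2 * ((π : ℝ) : ℂ) by ring,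
        Complex.sin_add_two_pi, Complex.sin_add_two_pi]
    have e2s : Complex.sin (((π : ℝ) : ℂ) * (s - 3)) = -Complex.sin (((π : ℝ) : ℂ) * s) := by
      rw [show ((π : ℝ) : ℂ) * (s - 3) =
        (((π : ℝ) : ℂ) * s - ((π : ℝ) : ℂ)) - 2 * ((π : ℝ) : ℂ) by ring,
        Complex.sin_sub_two_pi, Complex.sin_sub_pi]
    have hG4 : Complex.Gamma (-s - 3) = (-s - 4) * Complex.Gamma (-s - 4) := by
      rw [show (-s - 3 : ℂ) = (-s - 4) + 1 by ring,
        Complex.Gamma_add_one _ (fun h => hni (-4) (by push_cast; linear_combination -h))]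
    have hG3 : Complex.Gamma (5 - s) = (4 - s) * Complex.Gamma (4 - s) := by
      rw [show (5 - s : ℂ) = (4 - s) + 1 by ring,
        Complex.Gamma_add_one _ (fun h => hni 4 (by push_cast; linear_combination -h))]
    have h1 : Complex.Gamma (s + 4) * ((-s - 4) * Complex.Gamma (-s - 4)) * (2 * d * c)
        = ((π : ℝ) : ℂ) := by
      have hG1 := Complex.Gamma_mul_Gamma_one_sub (s + 4)
      rw [show (1 - (s + 4) : ℂ) = -s - 3 by ring, e1s] at hG1
      rw [← hG4, hG1, ← hsin2, div_mul_cancel₀ _ hS]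
    have h2 : Complex.Gamma (s - 3) * Complex.Gamma (4 - s) * (2 * d * c)
        = -((π : ℝ) : ℂ) := by
      have hG2 := Complex.Gamma_mul_Gamma_one_sub (s - 3)
      rw [show (1 - (s - 3) : ℂ) = 4 - s by ring, e2s] at hG2
      rw [hG2, div_neg, ← hsin2, neg_mul, div_mul_cancel₀ _ hS]
    have hpow : (2 * ((π : ℝ) : ℂ)) ^ (-(s + 4)) * (2 * ((π : ℝ) : ℂ)) ^ (-(s - 3)) *
        (2 * ((π : ℝ) : ℂ)) ^ (-(5 - s)) * (2 * ((π : ℝ) : ℂ)) ^ (-(-s - 4)) *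
        (2 * ((π : ℝ) : ℂ)) ^ 2 = 1 := by
      rw [← Complex.cpow_add _ _ h2pi, ← Complex.cpow_add _ _ h2pi,
        ← Complex.cpow_add _ _ h2pi,
        show -(s + 4) + -(s - 3) + -(5 - s) + -(-s - 4) = ((-2 : ℤ) : ℂ) by push_cast; ring,
        Complex.cpow_intCast]
      rw [zpow_neg, show ((2 : ℤ)) = ((2 : ℕ) : ℤ) by rfl, zpow_natCast]
      exact inv_mul_cancel₀ (pow_ne_zero 2 h2pi)
    rw [e1, e2, e3, e4, hc4, hc3, hc5, hcm4, hG3]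
    linear_combination
      (riemannZeta (s + 4) * riemannZeta (s - 3) * riemannZeta (5 - s) * riemannZeta (-s - 4) *
        (4 * ((2 * ((π : ℝ) : ℂ)) ^ (-(s + 4)) * (2 * ((π : ℝ) : ℂ)) ^ (-(s - 3)) *
          (2 * ((π : ℝ) : ℂ)) ^ (-(5 - s)) * (2 * ((π : ℝ) : ℂ)) ^ (-(-s - 4))) * (4 - s) *
          (Complex.Gamma (s - 3) * Complex.Gamma (4 - s) * (2 * d * c)))) * h1 +
      (riemannZeta (s + 4) * riemannZeta (s - 3) * riemannZeta (5 - s) * riemannZeta (-s - 4) *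
        (4 * ((2 * ((π : ℝ) : ℂ)) ^ (-(s + 4)) * (2 * ((π : ℝ) : ℂ)) ^ (-(s - 3)) *
          (2 * ((π : ℝ) : ℂ)) ^ (-(5 - s)) * (2 * ((π : ℝ) : ℂ)) ^ (-(-s - 4))) * (4 - s) *
          ((π : ℝ) : ℂ))) * h2 +
      (riemannZeta (s + 4) * riemannZeta (s - 3) * riemannZeta (5 - s) * riemannZeta (-s - 4) *
        (s - 4)) * hpow
end

section
/- For every natural number n ≥ 1 and every real s with 0 < s < 1, the omega combination of polygamma values satisfies ψ^{(2n)}(s/2) + ψ^{(2n)}((1-s)/2) - ψ^{(2n)}(1 - s/2) - ψ^{(2n)}((1+s)/2) = (-2)^{2n+1} · (2n)! · ( ∑' k : ℕ, (-1)^k / (k + s)^{2n+1} + ∑' k : ℕ, (-1)^k / (k + 1 - s)^{2n+1} ), where ψ^{(2n)}(t) = iteratedDeriv (2n+1) (fun x : ℝ => Real.log (Real.Gamma x)) t and the series are real tsums. -/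
open Real Filter Set Topology Finset

namespace PolygammaAux

noncomputable def S (p : ℕ) (x : ℝ) : ℝ := ∑' k : ℕ, ((x + k) ^ p)⁻¹

lemma summable_aux {p : ℕ} (hp : 2 ≤ p) :
    Summable (fun k : ℕ => ((((k : ℝ)) + 1) ^ p)⁻¹) := by
  have h := (Real.summable_one_div_nat_pow (p := p)).2 (by omega)
  have h2 := (summable_nat_add_iff (f := fun n : ℕ => 1 / (n : ℝ) ^ p) 1).2 h
  refine h2.congr fun k => ?_
  push_cast
  rw [one_div]

lemma summable_S {p : ℕ} (hp : 2 ≤ p) {x : ℝ} (hx : 0 < x) :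
    Summable (fun k : ℕ => ((x + (k : ℝ)) ^ p)⁻¹) := by
  rw [← summable_nat_add_iff 1]
  refine (summable_aux hp).of_nonneg_of_le (fun k => by positivity) (fun k => ?_)
  have hk : ((k : ℝ) + 1) ≤ x + ((k : ℕ) + 1 : ℕ) := by push_cast; linarith
  gcongr

lemma hasDerivAt_term {p : ℕ} (hp : 1 ≤ p) (k : ℝ) {x : ℝ} (hx : 0 < x + k) :
    HasDerivAt (fun y : ℝ => ((y + k) ^ p)⁻¹) (-(p : ℝ) * ((x + k) ^ (p + 1))⁻¹) x := by
  obtain ⟨q, rfl⟩ : ∃ q, p = q + 1 := ⟨p - 1, by omega⟩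
  have h : HasDerivAt (fun y : ℝ => (y + k) ^ (q + 1)) (((q : ℝ) + 1) * (x + k) ^ q) x := by
    have := ((hasDerivAt_id x).add_const k).fun_pow (q + 1)
    simpa using this
  have h2 := h.fun_inv (pow_ne_zero _ hx.ne')
  refine h2.congr_deriv ?_
  have hne : x + k ≠ 0 := hx.ne'
  push_cast
  field_simp
  ring


lemma hasDerivAt_S {p : ℕ} (hp : 2 ≤ p) {x : ℝ} (hx : 0 < x) :
    HasDerivAt (S p) (-(p : ℝ) * S (p + 1) x) x := by
  have hp1 : 2 ≤ p + 1 := by omega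
  have hx2 : 0 < x / 2 := half_pos hx
  have key : HasDerivAt (fun z : ℝ => ∑' k : ℕ, ((z + (k : ℝ)) ^ p)⁻¹)
      (∑' k : ℕ, (-(p : ℝ) * ((x + (k : ℝ)) ^ (p + 1))⁻¹)) x := by
    refine hasDerivAt_tsum_of_isPreconnected
      (u := fun k : ℕ => (p : ℝ) * ((x / 2 + (k : ℝ)) ^ (p + 1))⁻¹)
      ((summable_S hp1 hx2).mul_left _) isOpen_Ioi (convex_Ioi _).isPreconnected
      (fun k y hy => hasDerivAt_term (by omega) _ (by
        have : (0 : ℝ) < y := lt_trans hx2 hy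
        positivity))
      (fun k y hy => ?_) (mem_Ioi.2 (half_lt_self hx)) (summable_S hp hx)
      (mem_Ioi.2 (half_lt_self hx))
    have hy' : x / 2 < y := hy
    have hyk : (0 : ℝ) < y + k := by
      have : (0 : ℝ) ≤ (k : ℝ) := Nat.cast_nonneg k
      linarith
    have h1 : ‖-(p : ℝ) * ((y + (k : ℝ)) ^ (p + 1))⁻¹‖
        = (p : ℝ) * ((y + (k : ℝ)) ^ (p + 1))⁻¹ := by
      rw [norm_mul, norm_neg, Real.norm_natCast, Real.norm_eq_abs, abs_inv, abs_pow,
        abs_of_pos hyk]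
    rw [h1]
    have hxk : (0 : ℝ) < x / 2 + k := by
      have : (0 : ℝ) ≤ (k : ℝ) := Nat.cast_nonneg k
      linarith
    gcongr
  have hS : S p = fun z : ℝ => ∑' k : ℕ, ((z + (k : ℝ)) ^ p)⁻¹ := rfl
  rw [hS]
  convert key using 1
  rw [tsum_mul_left]
  rfl


lemma term_bound {a b : ℝ} (ha : 0 < a) (hab : a ≤ b) {x : ℝ} (hax : a ≤ x) (hxb : x ≤ b)
    (k : ℕ) :
    |(((k : ℝ) + 1)⁻¹ - (x + (k : ℝ))⁻¹)| ≤ (b + 1) * (min a 1)⁻¹ * ((((k : ℝ)) + 1) ^ 2)⁻¹ := by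
  have hk0 : (0 : ℝ) ≤ (k : ℝ) := Nat.cast_nonneg k
  have hk : (0 : ℝ) < (k : ℝ) + 1 := by linarith
  have hxk : (0 : ℝ) < x + k := by linarith
  have hmin : 0 < min a 1 := lt_min ha one_pos
  have heq : ((k : ℝ) + 1)⁻¹ - (x + (k : ℝ))⁻¹ = (x - 1) * (((k : ℝ) + 1) * (x + k))⁻¹ := by
    field_simp
    ring
  rw [heq, abs_mul, abs_inv, abs_of_pos (mul_pos hk hxk)]
  have h1 : |x - 1| ≤ b + 1 := abs_le.2 ⟨by linarith, by linarith⟩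
  have hmin2 : min a 1 * ((k : ℝ) + 1) ≤ x + k := by
    have h2 : min a 1 ≤ a := min_le_left _ _
    have h3 : min a 1 ≤ 1 := min_le_right _ _
    nlinarith
  calc |x - 1| * (((k : ℝ) + 1) * (x + k))⁻¹
      ≤ (b + 1) * (((k : ℝ) + 1) * (min a 1 * ((k : ℝ) + 1)))⁻¹ := by
        gcongr
        linarith
      _ = (b + 1) * (min a 1)⁻¹ * ((((k : ℝ)) + 1) ^ 2)⁻¹ := by
        rw [show ((k : ℝ) + 1) ^ 2 = ((k : ℝ) + 1) * ((k : ℝ) + 1) by ring,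
          mul_inv, mul_inv, mul_inv]
        ring

lemma summable_g1_terms {x : ℝ} (hx : 0 < x) :
    Summable (fun k : ℕ => ((k : ℝ) + 1)⁻¹ - (x + (k : ℝ))⁻¹) := by
  refine Summable.of_norm_bounded
    (g := fun k : ℕ => (x + 1) * (min x 1)⁻¹ * ((((k : ℝ)) + 1) ^ 2)⁻¹)
    (((summable_aux le_rfl).mul_left _)) (fun k => ?_)
  simpa [Real.norm_eq_abs] using term_bound hx le_rfl le_rfl le_rfl k

noncomputable def g1 (x : ℝ) : ℝ :=
  -Real.eulerMascheroniConstant + ∑' k : ℕ, (((k : ℝ) + 1)⁻¹ - (x + (k : ℝ))⁻¹)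

lemma harmonic_cast (n : ℕ) :
    ((harmonic n : ℚ) : ℝ) = ∑ m ∈ Finset.range n, ((m : ℝ) + 1)⁻¹ := by
  induction n with
  | zero => simp
  | succ n ih =>
    rw [harmonic_succ, Finset.sum_range_succ, ← ih]
    push_cast
    ring

lemma tuo_shift {F : ℕ → ℝ → ℝ} {f : ℝ → ℝ} {s : Set ℝ}
    (h : TendstoUniformlyOn F f atTop s) (j : ℕ) :
    TendstoUniformlyOn (fun n => F (n + j)) f atTop s :=
  fun u hu => (tendsto_add_atTop_nat j).eventually (h u hu)


lemma tendsto_c :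
    Tendsto (fun n : ℕ => Real.log n - ∑ m ∈ Finset.range (n + 1), ((m : ℝ) + 1)⁻¹) atTop
      (𝓝 (-Real.eulerMascheroniConstant)) := by
  have h1 : Tendsto (fun n : ℕ => ((harmonic (n + 1) : ℚ) : ℝ) - Real.log (n + 1)) atTop
      (𝓝 Real.eulerMascheroniConstant) := by
    have := Real.tendsto_harmonic_sub_log.comp (tendsto_add_atTop_nat 1)
    refine this.congr fun n => ?_
    simp only [Function.comp]
    push_cast
    ring_nf
  have h2 := Real.tendsto_log_nat_add_one_sub_log
  have h3 := (h1.neg).sub h2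
  have h4 : Tendsto (fun n : ℕ =>
      -(((harmonic (n + 1) : ℚ) : ℝ) - Real.log (n + 1)) - (Real.log (n + 1) - Real.log n))
      atTop (𝓝 (-Real.eulerMascheroniConstant)) := by simpa using h3
  refine h4.congr fun n => ?_
  rw [harmonic_cast]
  ring

lemma hasDerivAt_logGamma {x : ℝ} (hx : 0 < x) :
    HasDerivAt (fun y : ℝ => Real.log (Real.Gamma y)) (g1 x) x := by
  have hF' : ∀ n : ℕ, ∀ y : ℝ, y ∈ Set.Ioi (0:ℝ) →
      HasDerivAt (fun z => Real.BohrMollerup.logGammaSeq z n)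
        (Real.log n - ∑ m ∈ Finset.range (n + 1), (y + (m : ℝ))⁻¹) y := by
    intro n y hy
    have hy0 : (0 : ℝ) < y := hy
    have h1 : HasDerivAt (fun z : ℝ => z * Real.log n + Real.log (Nat.factorial n)) (Real.log n) y := by
      simpa using ((hasDerivAt_id y).mul_const (Real.log n)).add_const (Real.log (Nat.factorial n))
    have h2 : HasDerivAt (fun z : ℝ => ∑ m ∈ Finset.range (n + 1), Real.log (z + (m : ℝ)))
        (∑ m ∈ Finset.range (n + 1), (y + (m : ℝ))⁻¹) y := by
      refine HasDerivAt.fun_sum fun m _ => ?_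
      have hm : y + (m : ℝ) ≠ 0 := by
        have : (0 : ℝ) ≤ (m : ℝ) := Nat.cast_nonneg m
        linarith
      have := (Real.hasDerivAt_log hm).comp y ((hasDerivAt_id y).add_const (m : ℝ))
      simpa [Function.comp_def] using this
    have := h1.sub h2
    refine this.congr_of_eventuallyEq (Eventually.of_forall fun z => ?_)
    simp [Real.BohrMollerup.logGammaSeq]
  have htlu : TendstoLocallyUniformlyOn
      (fun n : ℕ => fun y : ℝ => Real.log n - ∑ m ∈ Finset.range (n + 1), (y + (m : ℝ))⁻¹)
      g1 atTop (Set.Ioi 0) := by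
    rw [tendstoLocallyUniformlyOn_iff_forall_isCompact isOpen_Ioi]
    intro K hK hKc
    rcases K.eq_empty_or_nonempty with rfl | hne
    · simp [tendstoUniformlyOn_empty]
    have haK : sInf K ∈ K := hKc.sInf_mem hne
    have hbK : sSup K ∈ K := hKc.sSup_mem hne
    set a := sInf K
    set b := sSup K
    have ha : 0 < a := hK haK
    have hab : a ≤ b := csInf_le_csSup hne hKc.bddBelow hKc.bddAbove
    have hbounds : ∀ x ∈ K, a ≤ x ∧ x ≤ b := fun x hx =>
      ⟨csInf_le hKc.bddBelow hx, le_csSup hKc.bddAbove hx⟩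
    -- uniform convergence of the tsum part
    have htsum : TendstoUniformlyOn
        (fun N : ℕ => fun x : ℝ => ∑ m ∈ Finset.range N, (((m : ℝ) + 1)⁻¹ - (x + (m : ℝ))⁻¹))
        (fun x : ℝ => ∑' m : ℕ, (((m : ℝ) + 1)⁻¹ - (x + (m : ℝ))⁻¹)) atTop K := by
      refine tendstoUniformlyOn_tsum_nat
        (u := fun k : ℕ => (b + 1) * (min a 1)⁻¹ * ((((k : ℝ)) + 1) ^ 2)⁻¹)
        (((summable_aux le_rfl).mul_left _)) (fun m x hx => ?_)
      have hb := hbounds x hx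
      simpa [Real.norm_eq_abs] using term_bound ha hab hb.1 hb.2 m
    have htsum' := tuo_shift htsum 1
    have hconst : TendstoUniformlyOn
        (fun n : ℕ => fun _ : ℝ =>
          Real.log n - ∑ m ∈ Finset.range (n + 1), ((m : ℝ) + 1)⁻¹)
        (fun _ : ℝ => -Real.eulerMascheroniConstant) atTop K :=
      tendsto_c.tendstoUniformlyOn_const K
    have hadd := hconst.add htsum'
    refine hadd.congr ?_ |>.congr_right ?_
    · filter_upwards with n
      intro x hx
      simp only [Pi.add_apply]
      rw [Finset.sum_sub_distrib]
      ring
    · intro x hx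
      rfl
  have hptw : ∀ y ∈ Set.Ioi (0:ℝ),
      Tendsto (fun n : ℕ => Real.BohrMollerup.logGammaSeq y n) atTop
        (𝓝 (Real.log (Real.Gamma y))) := fun y hy => Real.BohrMollerup.tendsto_log_gamma hy
  exact hasDerivAt_of_tendstoLocallyUniformlyOn isOpen_Ioi htlu
    (Eventually.of_forall hF') hptw (Set.mem_Ioi.2 hx)


lemma hasDerivAt_g1 {x : ℝ} (hx : 0 < x) : HasDerivAt g1 (S 2 x) x := by
  have hx2 : 0 < x / 2 := half_pos hx
  have key : HasDerivAt (fun z : ℝ => ∑' k : ℕ, (((k : ℝ) + 1)⁻¹ - (z + (k : ℝ))⁻¹))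
      (∑' k : ℕ, ((x + (k : ℝ)) ^ 2)⁻¹) x := by
    refine hasDerivAt_tsum_of_isPreconnected
      (u := fun k : ℕ => ((x / 2 + (k : ℝ)) ^ 2)⁻¹)
      (g' := fun (k : ℕ) (y : ℝ) => ((y + (k : ℝ)) ^ 2)⁻¹)
      (summable_S le_rfl hx2) isOpen_Ioi (convex_Ioi (x/2)).isPreconnected
      (fun k y hy => ?_) (fun k y hy => ?_)
      (Set.mem_Ioi.2 (half_lt_self hx)) (summable_g1_terms hx)
      (Set.mem_Ioi.2 (half_lt_self hx))
    · have hy' : x / 2 < y := hy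
      have hk0 : (0 : ℝ) ≤ (k : ℝ) := Nat.cast_nonneg k
      have hyk : (0 : ℝ) < y + k := by linarith
      have hterm := hasDerivAt_term (p := 1) le_rfl (k : ℝ) hyk
      have := (hasDerivAt_const y (((k : ℝ) + 1)⁻¹)).fun_sub hterm
      simp only [pow_one] at this
      convert this using 1
      simp
    · have hy' : x / 2 < y := hy
      have hk0 : (0 : ℝ) ≤ (k : ℝ) := Nat.cast_nonneg k
      have hyk : (0 : ℝ) < y + k := by linarith
      have hxk : (0 : ℝ) < x / 2 + k := by linarith
      simp only [Real.norm_eq_abs, abs_inv, abs_pow, abs_of_pos hyk]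
      gcongr
  have hg1 : g1 = fun z : ℝ =>
      -Real.eulerMascheroniConstant + ∑' k : ℕ, (((k : ℝ) + 1)⁻¹ - (z + (k : ℝ))⁻¹) := rfl
  rw [hg1]
  have := (hasDerivAt_const x (-Real.eulerMascheroniConstant)).fun_add key
  simpa [S] using this

lemma key : ∀ p : ℕ, 2 ≤ p → ∀ x : ℝ, 0 < x →
    iteratedDeriv p (fun y : ℝ => Real.log (Real.Gamma y)) x
      = (-1 : ℝ) ^ p * (Nat.factorial (p - 1) : ℝ) * S p x := by
  intro p hp
  induction p, hp using Nat.le_induction with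
  | base =>
    intro x hx
    rw [show (2 : ℕ) = 1 + 1 by norm_num, iteratedDeriv_succ, iteratedDeriv_one]
    have hEq : deriv (fun y : ℝ => Real.log (Real.Gamma y)) =ᶠ[𝓝 x] g1 := by
      filter_upwards [isOpen_Ioi.mem_nhds (Set.mem_Ioi.2 hx)] with y hy
      exact (hasDerivAt_logGamma hy).deriv
    rw [hEq.deriv_eq, (hasDerivAt_g1 hx).deriv]
    norm_num
  | succ p hp ih =>
    intro x hx
    rw [iteratedDeriv_succ]
    have hEq : iteratedDeriv p (fun y : ℝ => Real.log (Real.Gamma y)) =ᶠ[𝓝 x]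
        fun y => (-1 : ℝ) ^ p * (Nat.factorial (p - 1) : ℝ) * S p y := by
      filter_upwards [isOpen_Ioi.mem_nhds (Set.mem_Ioi.2 hx)] with y hy
      exact ih y hy
    rw [hEq.deriv_eq]
    have hd : HasDerivAt (fun y : ℝ => (-1 : ℝ) ^ p * (Nat.factorial (p - 1) : ℝ) * S p y)
        (((-1 : ℝ) ^ p * (Nat.factorial (p - 1) : ℝ)) * (-(p : ℝ) * S (p + 1) x)) x :=
      (hasDerivAt_S hp hx).const_mul _
    rw [hd.deriv]
    have hfac : ((p : ℝ)) * (Nat.factorial (p - 1) : ℝ) = (Nat.factorial p : ℝ) := by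
      exact_mod_cast Nat.mul_factorial_pred (by omega)
    have hp1 : p + 1 - 1 = p := by omega
    rw [hp1, pow_succ, ← hfac]
    ring

lemma half_split {p : ℕ} (hp : 2 ≤ p) {t : ℝ} (ht0 : 0 < t) (ht1 : t < 1) :
    S p (t / 2) - S p ((1 + t) / 2)
      = 2 ^ p * ∑' k : ℕ, (-1 : ℝ) ^ k / ((k : ℝ) + t) ^ p := by
  have h2 : (0 : ℝ) < t / 2 := by linarith
  have h3 : (0 : ℝ) < (1 + t) / 2 := by linarith
  have hdouble : ∀ y : ℝ, 0 < y → (2 : ℝ) ^ p * ((2 * y) ^ p)⁻¹ = (y ^ p)⁻¹ := by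
    intro y hy
    rw [mul_pow, mul_inv, ← mul_assoc, mul_inv_cancel₀ (by positivity), one_mul]
  set f : ℕ → ℝ := fun k => (-1 : ℝ) ^ k * 2 ^ p * ((t + (k : ℝ)) ^ p)⁻¹ with hf
  have hke : ∀ j : ℕ, f (2 * j) = ((t / 2 + (j : ℝ)) ^ p)⁻¹ := by
    intro j
    have h4 : (0 : ℝ) < t / 2 + j := by positivity
    have h5 : t + ((2 * j : ℕ) : ℝ) = 2 * (t / 2 + j) := by push_cast; ring
    rw [hf]
    simp only [pow_mul, neg_one_sq, one_pow, one_mul, h5]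
    exact hdouble _ h4
  have hko : ∀ j : ℕ, f (2 * j + 1) = -(((1 + t) / 2 + (j : ℝ)) ^ p)⁻¹ := by
    intro j
    have h4 : (0 : ℝ) < (1 + t) / 2 + j := by positivity
    have h5 : t + ((2 * j + 1 : ℕ) : ℝ) = 2 * ((1 + t) / 2 + j) := by push_cast; ring
    have h6 : (-1 : ℝ) ^ (2 * j + 1) = -1 := Odd.neg_one_pow ⟨j, by ring⟩
    rw [hf]
    simp only [h6, h5, neg_one_mul, neg_mul, one_mul]
    rw [hdouble _ h4]
  have hsume : Summable (fun j : ℕ => f (2 * j)) :=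
    (summable_S hp h2).congr fun j => (hke j).symm
  have hsumo : Summable (fun j : ℕ => f (2 * j + 1)) :=
    ((summable_S hp h3).neg).congr fun j => (hko j).symm
  have heo := tsum_even_add_odd hsume hsumo
  have h5 : ∑' j : ℕ, f (2 * j) = S p (t / 2) := tsum_congr fun j => hke j
  have h6 : ∑' j : ℕ, f (2 * j + 1) = -S p ((1 + t) / 2) := by
    rw [tsum_congr fun j => hko j]
    exact tsum_neg
  have h7 : ∑' k : ℕ, f k = 2 ^ p * ∑' k : ℕ, (-1 : ℝ) ^ k / ((k : ℝ) + t) ^ p := by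
    rw [← tsum_mul_left]
    refine tsum_congr fun k => ?_
    rw [hf]
    simp only [div_eq_mul_inv]
    ring_nf
  rw [h5, h6, h7] at heo
  linarith

end PolygammaAux

theorem omega_polygamma_alternating_sum (n : ℕ) (hn : 1 ≤ n) (s : ℝ)
    (hs0 : 0 < s) (hs1 : s < 1) :
    iteratedDeriv (2*n+1) (fun x : ℝ => Real.log (Real.Gamma x)) (s/2) +
      iteratedDeriv (2*n+1) (fun x : ℝ => Real.log (Real.Gamma x)) ((1-s)/2) -
      iteratedDeriv (2*n+1) (fun x : ℝ => Real.log (Real.Gamma x)) (1 - s/2) -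
      iteratedDeriv (2*n+1) (fun x : ℝ => Real.log (Real.Gamma x)) ((1+s)/2) =
      (-2 : ℝ)^(2*n+1) * (Nat.factorial (2*n) : ℝ) *
        ((∑' k : ℕ, (-1 : ℝ)^k / (k + s)^(2*n+1)) +
          ∑' k : ℕ, (-1 : ℝ)^k / (k + 1 - s)^(2*n+1)) := by
  have hp : 2 ≤ 2 * n + 1 := by omega
  rw [PolygammaAux.key (2*n+1) hp (s/2) (by linarith),
      PolygammaAux.key (2*n+1) hp ((1-s)/2) (by linarith),
      PolygammaAux.key (2*n+1) hp (1 - s/2) (by linarith),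
      PolygammaAux.key (2*n+1) hp ((1+s)/2) (by linarith)]
  have hfc : 2 * n + 1 - 1 = 2 * n := by omega
  rw [hfc]
  have hodd : (-1 : ℝ) ^ (2*n+1) = -1 := Odd.neg_one_pow ⟨n, by ring⟩
  rw [hodd]
  have e1 := PolygammaAux.half_split hp hs0 hs1
  have e2 := PolygammaAux.half_split hp (t := 1 - s) (by linarith) (by linarith)
  have hrw : (1 : ℝ) - s/2 = (1 + (1 - s))/2 := by ring
  rw [hrw]
  have e2' : (∑' k : ℕ, (-1 : ℝ)^k / ((k : ℝ) + (1 - s))^(2*n+1))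
      = ∑' k : ℕ, (-1 : ℝ)^k / ((k : ℝ) + 1 - s)^(2*n+1) :=
    tsum_congr fun k => by ring_nf
  have hneg2 : (-2 : ℝ) ^ (2*n+1) = -(2 ^ (2*n+1)) := Odd.neg_pow ⟨n, by ring⟩ 2
  have comb : (2 : ℝ) ^ (2*n+1) *
      ((∑' k : ℕ, (-1 : ℝ)^k / ((k : ℝ) + s)^(2*n+1)) +
        ∑' k : ℕ, (-1 : ℝ)^k / ((k : ℝ) + 1 - s)^(2*n+1))
      = (PolygammaAux.S (2*n+1) (s/2) - PolygammaAux.S (2*n+1) ((1+s)/2)) +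
        (PolygammaAux.S (2*n+1) ((1-s)/2) - PolygammaAux.S (2*n+1) ((1+(1-s))/2)) := by
    rw [mul_add, ← e1, ← e2', ← e2]
  rw [hneg2]
  linear_combination ((Nat.factorial (2*n) : ℝ)) * comb
end
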